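/- arXiv:2503.09240 — 13 statements merged into one kernel-verified Lean document; each statement's English description precedes it below -/
import Mathlib

section
/- Let F be a semi-skyline augmented filling of shape α with basement σ. If ℓ < r, α_ℓ ≥ α_r, 0 ≤ a ≤ α_r, and F(ℓ,a) < F(r,a), then F(ℓ,i) < F(r,i+1) for all 0 ≤ i ≤ a−1. -/
/-- A semi-skyline augmented filling of shape `α` with basement `σ`.
Entries are positive naturals; `σ i` as a value in `[n]` is `(σ i : ℕ) + 1`.
Conditions: positivity, basement, no descents, type A and type B inversion triples. -/
def IsSSAF (n : ℕ) (α : Fin n → ℕ) (σ : Equiv.Perm (Fin n)) (F : Fin n → ℕ → ℕ) : Prop :=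
  (∀ i j, j ≤ α i → 1 ≤ F i j) ∧
  (∀ i, F i 0 = (σ i : ℕ) + 1) ∧
  (∀ i j, j + 1 ≤ α i → F i (j + 1) ≤ F i j) ∧
  (∀ ℓ r : Fin n, ∀ i : ℕ, ℓ < r → α r ≤ α ℓ → i + 1 ≤ α r →
    ¬ (F ℓ (i + 1) ≤ F r (i + 1) ∧ F r (i + 1) ≤ F ℓ i)) ∧
  (∀ ℓ r : Fin n, ∀ i : ℕ, ℓ < r → α ℓ < α r → i ≤ α ℓ → i + 1 ≤ α r →
    ¬ (F r (i + 1) ≤ F ℓ i ∧ F ℓ i ≤ F r i))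

theorem stmt0 (n : ℕ) (α : Fin n → ℕ) (σ : Equiv.Perm (Fin n)) (F : Fin n → ℕ → ℕ)
    (hF : IsSSAF n α σ F) (ℓ r : Fin n) (hlr : ℓ < r) (hα : α r ≤ α ℓ)
    (a : ℕ) (ha : a ≤ α r) (h : F ℓ a < F r a) :
    ∀ i, i + 1 ≤ a → F ℓ i < F r (i + 1) := by
  obtain ⟨_, _, hdesc, hA, _⟩ := hF
  have key : ∀ k, k ≤ a → F ℓ (a - k) < F r (a - k) := by
    intro k
    induction k with
    | zero => intro _; simpa using h
    | succ k ih =>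
      intro hk
      have hk' : k ≤ a := Nat.le_of_succ_le hk
      have ihk := ih hk'
      set j := a - (k + 1) with hj
      have hj1 : j + 1 = a - k := by omega
      have hle : j + 1 ≤ α r := by omega
      have htri := hA ℓ r j hlr hα hle
      have h1 : F ℓ (j + 1) ≤ F r (j + 1) := by rw [hj1]; exact ihk.le
      have h2 : F ℓ j < F r (j + 1) := by
        by_contra hcon
        exact htri ⟨h1, by omega⟩
      calc F ℓ j < F r (j + 1) := h2
        _ ≤ F r j := hdesc r j (le_trans hle (le_refl _))
  intro i hi
  have hstrict : F ℓ (i + 1) < F r (i + 1) := by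
    have := key (a - (i + 1)) (Nat.sub_le _ _)
    rwa [Nat.sub_sub_self hi] at this
  have htri := hA ℓ r i hlr hα (le_trans hi ha)
  by_contra hcon
  exact htri ⟨hstrict.le, by omega⟩
end

section
/- Let F be a semi-skyline augmented filling of shape α with basement σ. If ℓ < r, α_ℓ ≥ α_r, 0 ≤ a ≤ α_r, and F(ℓ,a) > F(r,a), then F(ℓ,i) > F(r,i) for all a ≤ i ≤ α_r. -/
theorem stmt1 (n : ℕ) (α : Fin n → ℕ) (σ : Equiv.Perm (Fin n)) (F : Fin n → ℕ → ℕ)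
    (hF : IsSSAF n α σ F) (ℓ r : Fin n) (hlr : ℓ < r) (hα : α r ≤ α ℓ)
    (a : ℕ) (ha : a ≤ α r) (h : F r a < F ℓ a) :
    ∀ i, a ≤ i → i ≤ α r → F r i < F ℓ i := by
  obtain ⟨_, _, hdesc, hA, _⟩ := hF
  intro i hai hir
  induction i with
  | zero => have : a = 0 := Nat.le_zero.mp hai; subst this; exact h
  | succ k ih =>
    rcases Nat.lt_or_ge a (k+1) with hk | hk
    · have hk' : a ≤ k := Nat.lt_succ_iff.mp hk
      have ihk := ih hk' (le_trans (Nat.le_succ k) hir)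
      have hA' := hA ℓ r k hlr hα hir
      have hr : F r (k+1) ≤ F r k := hdesc r k hir
      have : ¬ F ℓ (k+1) ≤ F r (k+1) := fun hle => hA' ⟨hle, le_of_lt (lt_of_le_of_lt hr ihk)⟩
      omega
    · have : a = k+1 := le_antisymm hai hk
      subst this; exact h
end

section
/- Let F be a semi-skyline augmented filling of shape α with basement σ. If ℓ < r, α_ℓ < α_r, 0 ≤ a ≤ α_ℓ, and F(ℓ,a) < F(r,a), then F(ℓ,i) < F(r,i+1) for all a ≤ i ≤ α_ℓ. -/
theorem stmt2 (n : ℕ) (α : Fin n → ℕ) (σ : Equiv.Perm (Fin n)) (F : Fin n → ℕ → ℕ)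
    (hF : IsSSAF n α σ F) (ℓ r : Fin n) (hlr : ℓ < r) (hα : α ℓ < α r)
    (a : ℕ) (ha : a ≤ α ℓ) (h : F ℓ a < F r a) :
    ∀ i, a ≤ i → i ≤ α ℓ → F ℓ i < F r (i + 1) := by
  obtain ⟨-, -, hdesc, -, hB⟩ := hF
  intro i
  induction i with
  | zero =>
    intro hai _
    have : a = 0 := Nat.le_zero.mp hai
    subst this
    have := hB ℓ r 0 hlr hα ha (by omega)
    omega
  | succ k ih =>
    intro hak hkl
    rcases Nat.lt_or_ge a (k + 1) with hlt | hge
    · -- a ≤ k, use ih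
      have h1 : F ℓ k < F r (k + 1) := ih (by omega) (by omega)
      have h2 : F ℓ (k + 1) ≤ F ℓ k := hdesc ℓ k (by omega)
      have := hB ℓ r (k + 1) hlr hα hkl (by omega)
      omega
    · have : a = k + 1 := by omega
      subst this
      have := hB ℓ r (k + 1) hlr hα hkl (by omega)
      omega
end

section
/- Let F be a semi-skyline augmented filling of shape α with basement σ. If ℓ < r, α_ℓ < α_r, 0 ≤ a ≤ α_ℓ, and F(ℓ,a) > F(r,a), then F(ℓ,i) > F(r,i) for all 0 ≤ i ≤ a. -/
theorem stmt3 (n : ℕ) (α : Fin n → ℕ) (σ : Equiv.Perm (Fin n)) (F : Fin n → ℕ → ℕ)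
    (hF : IsSSAF n α σ F) (ℓ r : Fin n) (hlr : ℓ < r) (hα : α ℓ < α r)
    (a : ℕ) (ha : a ≤ α ℓ) (h : F r a < F ℓ a) :
    ∀ i, i ≤ a → F r i < F ℓ i := by
  obtain ⟨_, _, hdesc, _, hB⟩ := hF
  have key : ∀ d, ∀ i, i + d = a → F r i < F ℓ i := by
    intro d
    induction d with
    | zero => intro i hi; simp only [Nat.add_zero] at hi; subst hi; exact h
    | succ d ih =>
      intro i hi
      have h1 : F r (i + 1) < F ℓ (i + 1) := ih (i + 1) (by omega)
      have hi1 : i + 1 ≤ α ℓ := by omega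
      have h2 : F ℓ (i + 1) ≤ F ℓ i := hdesc ℓ i hi1
      have h3 := hB ℓ r i hlr hα (by omega) (by omega)
      by_contra hc
      exact h3 ⟨by omega, by omega⟩
  intro i hi
  exact key (a - i) i (by omega)
end

section
/- Let F be an SSAF of shape α with basement σ, and let F' be the filling obtained from F by deleting all cells with entry 1 other than the basement cell. Let β be the shape of F'. Then for every pair ℓ < r with α_ℓ ≥ α_r and β_ℓ ≥ β_r, we have α_r ≤ β_ℓ. -/
/-- The shape obtained by deleting all non-basement cells with entry `1`
(entries weakly decrease up a column, so such cells sit at the top):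
`shapeDel α F i` is the number of non-basement cells of column `i` with entry at least `2`. -/
def shapeDel (n : ℕ) (α : Fin n → ℕ) (F : Fin n → ℕ → ℕ) (i : Fin n) : ℕ :=
  ((Finset.Icc 1 (α i)).filter (fun j => 2 ≤ F i j)).card

lemma mono_col (n : ℕ) (α : Fin n → ℕ) (F : Fin n → ℕ → ℕ)
    (hd : ∀ i j, j + 1 ≤ α i → F i (j + 1) ≤ F i j) (c : Fin n) :
    ∀ k j, k ≤ j → j ≤ α c → F c j ≤ F c k := by
  intro k j hkj hj
  induction j with
  | zero => simp_all
  | succ m ih =>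
    rcases Nat.eq_or_lt_of_le hkj with h | h
    · subst h; rfl
    · exact le_trans (hd c m hj) (ih (Nat.lt_succ_iff.mp h) (le_trans (Nat.le_succ m) hj))

lemma le_shapeDel (n : ℕ) (α : Fin n → ℕ) (F : Fin n → ℕ → ℕ)
    (hd : ∀ i j, j + 1 ≤ α i → F i (j + 1) ≤ F i j) (c : Fin n) (j : ℕ)
    (h1 : 1 ≤ j) (h2 : j ≤ α c) (h3 : 2 ≤ F c j) : j ≤ shapeDel n α F c := by
  have hsub : Finset.Icc 1 j ⊆ (Finset.Icc 1 (α c)).filter (fun k => 2 ≤ F c k) := by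
    intro k hk
    simp only [Finset.mem_Icc, Finset.mem_filter] at hk ⊢
    exact ⟨⟨hk.1, le_trans hk.2 h2⟩, le_trans h3 (mono_col n α F hd c k j hk.2 h2)⟩
  have := Finset.card_le_card hsub
  simpa [shapeDel, Nat.card_Icc] using this

theorem stmt4 (n : ℕ) (α : Fin n → ℕ) (σ : Equiv.Perm (Fin n)) (F : Fin n → ℕ → ℕ)
    (hF : IsSSAF n α σ F) (ℓ r : Fin n) (hlr : ℓ < r) (hα : α r ≤ α ℓ)
    (hβ : shapeDel n α F r ≤ shapeDel n α F ℓ) :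
    α r ≤ shapeDel n α F ℓ := by
  obtain ⟨hpos, hbase, hd, hA, hB⟩ := hF
  by_contra h
  push_neg at h
  set bl := shapeDel n α F ℓ with hbl
  have h1 : bl + 1 ≤ α r := h
  -- F ℓ (bl+1) = 1
  have hFl : F ℓ (bl + 1) = 1 := by
    have hle : bl + 1 ≤ α ℓ := le_trans h1 hα
    have : ¬ 2 ≤ F ℓ (bl + 1) := by
      intro h2
      have := le_shapeDel n α F hd ℓ (bl + 1) (Nat.le_add_left 1 bl) hle h2
      omega
    have := hpos ℓ (bl + 1) hle
    omega
  have hFr : F r (bl + 1) = 1 := by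
    have : ¬ 2 ≤ F r (bl + 1) := by
      intro h2
      have := le_shapeDel n α F hd r (bl + 1) (Nat.le_add_left 1 bl) h1 h2
      omega
    have := hpos r (bl + 1) h1
    omega
  exact hA ℓ r bl hlr hα h1 ⟨by omega, by
    have := hpos ℓ bl (le_trans (Nat.le_succ bl) (le_trans h1 hα))
    omega⟩
end

section
/- Let F be an SSAF of shape α with basement σ, and let F' be obtained by deleting all non-basement 1-cells, with β the shape of F'. Then for every pair ℓ < r with α_ℓ ≥ α_r and β_ℓ < β_r, we have α_r = β_r and σ(ℓ) < σ(r). -/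
theorem stmt5 (n : ℕ) (α : Fin n → ℕ) (σ : Equiv.Perm (Fin n)) (F : Fin n → ℕ → ℕ)
    (hF : IsSSAF n α σ F) (ℓ r : Fin n) (hlr : ℓ < r) (hα : α r ≤ α ℓ)
    (hβ : shapeDel n α F ℓ < shapeDel n α F r) :
    α r = shapeDel n α F r ∧ (σ ℓ : ℕ) < (σ r : ℕ) := by
  obtain ⟨hpos, hbase, hdec, hA, hB⟩ := hF
  have hmono : ∀ (i : Fin n) (j k : ℕ), j ≤ k → k ≤ α i → F i k ≤ F i j := by
    intro i j k hjk hk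
    induction k with
    | zero => simp [Nat.le_zero.mp hjk]
    | succ k ih =>
      rcases Nat.eq_or_lt_of_le hjk with h | h
      · simp [h]
      · exact le_trans (hdec i k hk)
          (ih (Nat.lt_succ_iff.mp h) (le_trans (Nat.le_succ k) hk))
  have hge : ∀ (i : Fin n) (m : ℕ), 1 ≤ m → m ≤ α i → 2 ≤ F i m →
      m ≤ shapeDel n α F i := by
    intro i m h1 hm h2
    have hsub : Finset.Icc 1 m ⊆ (Finset.Icc 1 (α i)).filter (fun j => 2 ≤ F i j) := by
      intro j hj
      simp only [Finset.mem_Icc, Finset.mem_filter] at *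
      exact ⟨⟨hj.1, le_trans hj.2 hm⟩, le_trans h2 (hmono i j m hj.2 hm)⟩
    have := Finset.card_le_card hsub
    simpa [shapeDel] using this
  have hlt : ∀ (i : Fin n) (m : ℕ), 1 ≤ m → F i m ≤ 1 → shapeDel n α F i < m := by
    intro i m h1 hle
    have hsub : (Finset.Icc 1 (α i)).filter (fun j => 2 ≤ F i j) ⊆ Finset.Icc 1 (m-1) := by
      intro j hj
      simp only [Finset.mem_Icc, Finset.mem_filter] at *
      refine ⟨hj.1.1, ?_⟩
      by_contra h
      push_neg at h
      have hmj : m ≤ j := by omega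
      have := le_trans (hmono i m j hmj hj.1.2) hle
      omega
    have := Finset.card_le_card hsub
    have h2 : shapeDel n α F i ≤ m - 1 := by simpa [shapeDel] using this
    omega
  set b := shapeDel n α F ℓ with hb
  set c := shapeDel n α F r with hc
  have hcar : c ≤ α r := by
    have := Finset.card_le_card (Finset.filter_subset (fun j => 2 ≤ F r j) (Finset.Icc 1 (α r)))
    simpa [shapeDel, hc] using this
  have hbar : b + 1 ≤ α r := by omega
  have hFl1 : F ℓ (b + 1) = 1 := by
    have h1 : 1 ≤ F ℓ (b + 1) := hpos ℓ (b + 1) (le_trans hbar hα)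
    by_contra h
    have h2 : 2 ≤ F ℓ (b + 1) := by omega
    have := hge ℓ (b + 1) (by omega) (le_trans hbar hα) h2
    omega
  have hFr2 : 2 ≤ F r (b + 1) := by
    by_contra h
    push_neg at h
    have := hlt r (b + 1) (by omega) (by omega)
    omega
  constructor
  · -- α r = c
    by_cases h2 : 2 ≤ F r (α r)
    · have := hge r (α r) (by omega) le_rfl h2
      omega
    · push_neg at h2
      have hr1 : F r (α r) = 1 := by
        have := hpos r (α r) le_rfl
        omega
      have hαr1 : 1 ≤ α r := by omega
      exfalso
      have hFlαr : F ℓ (α r) = 1 := by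
        have h1 : 1 ≤ F ℓ (α r) := hpos ℓ (α r) hα
        have := hmono ℓ (b + 1) (α r) (by omega) hα
        omega
      have htr := hA ℓ r (α r - 1) hlr hα (by omega)
      have heq : α r - 1 + 1 = α r := by omega
      rw [heq] at htr
      exact htr ⟨by omega, le_trans (le_of_eq hr1) (hpos ℓ (α r - 1) (by omega))⟩
  · -- σ ℓ < σ r
    have key : ∀ d, d ≤ b + 1 → F ℓ (b + 1 - d) < F r (b + 1 - d) := by
      intro d
      induction d with
      | zero => intro _; simpa using by omega
      | succ d ih =>
        intro hd
        have ihd := ih (by omega)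
        set i := b - d with hi
        have h1 : b + 1 - d = i + 1 := by omega
        have h2 : b + 1 - (d + 1) = i := by omega
        rw [h1] at ihd
        rw [h2]
        have htr := hA ℓ r i hlr hα (by omega)
        have hFri : F r (i + 1) ≤ F r i := hdec r i (by omega)
        by_contra h
        push_neg at h
        exact htr ⟨le_of_lt ihd, by omega⟩
    have := key (b + 1) le_rfl
    simp only [Nat.sub_self] at this
    rw [hbase ℓ, hbase r] at this
    omega
end

section
/- Let F be an SSAF of shape α with basement σ, and let F' be obtained by deleting all non-basement 1-cells, with β the shape of F'. Then for every pair ℓ < r with α_ℓ < α_r and β_ℓ ≥ β_r, we have α_ℓ = β_ℓ and σ(ℓ) > σ(r). -/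
lemma ssaf_mono (n : ℕ) (α : Fin n → ℕ) (σ : Equiv.Perm (Fin n)) (F : Fin n → ℕ → ℕ)
    (hF : IsSSAF n α σ F) (i : Fin n) :
    ∀ k j, j ≤ k → k ≤ α i → F i k ≤ F i j := by
  intro k
  induction k with
  | zero =>
    intro j hj _
    have : j = 0 := Nat.le_zero.mp hj
    simp [this]
  | succ k ih =>
    intro j hj hk
    rcases Nat.lt_or_ge j (k+1) with h | h
    · exact le_trans (hF.2.2.1 i k hk) (ih j (by omega) (by omega))
    · have : j = k + 1 := by omega
      subst this; exact le_refl _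

lemma ssaf_mem (n : ℕ) (α : Fin n → ℕ) (σ : Equiv.Perm (Fin n)) (F : Fin n → ℕ → ℕ)
    (hF : IsSSAF n α σ F) (i : Fin n) (j : ℕ) (h1 : 1 ≤ j) (h2 : j ≤ α i) :
    2 ≤ F i j ↔ j ≤ shapeDel n α F i := by
  constructor
  · intro h
    have hsub : Finset.Icc 1 j ⊆ (Finset.Icc 1 (α i)).filter (fun k => 2 ≤ F i k) := by
      intro k hk
      simp only [Finset.mem_Icc] at hk
      simp only [Finset.mem_filter, Finset.mem_Icc]
      exact ⟨⟨hk.1, le_trans hk.2 h2⟩, le_trans h (ssaf_mono n α σ F hF i j k hk.2 h2)⟩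
    have := Finset.card_le_card hsub
    simpa [shapeDel, Nat.card_Icc] using this
  · intro h
    by_contra hlt
    push_neg at hlt
    have hsub : (Finset.Icc 1 (α i)).filter (fun k => 2 ≤ F i k) ⊆ Finset.Icc 1 (j - 1) := by
      intro k hk
      simp only [Finset.mem_filter, Finset.mem_Icc] at hk
      simp only [Finset.mem_Icc]
      refine ⟨hk.1.1, ?_⟩
      by_contra hkj
      push_neg at hkj
      have : F i k ≤ F i j := ssaf_mono n α σ F hF i k j (by omega) hk.1.2
      omega
    have := Finset.card_le_card hsub
    simp only [Nat.card_Icc] at this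
    have : shapeDel n α F i ≤ j - 1 := by simpa [shapeDel] using this
    omega

theorem stmt6 (n : ℕ) (α : Fin n → ℕ) (σ : Equiv.Perm (Fin n)) (F : Fin n → ℕ → ℕ)
    (hF : IsSSAF n α σ F) (ℓ r : Fin n) (hlr : ℓ < r) (hα : α ℓ < α r)
    (hβ : shapeDel n α F r ≤ shapeDel n α F ℓ) :
    α ℓ = shapeDel n α F ℓ ∧ (σ r : ℕ) < (σ ℓ : ℕ) := by
  obtain ⟨hpos, hbase, hdesc, _hA, hB⟩ := hF
  have hβℓ : shapeDel n α F ℓ ≤ α ℓ := by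
    have := Finset.card_le_card (Finset.filter_subset (fun j => 2 ≤ F ℓ j) (Finset.Icc 1 (α ℓ)))
    simpa [shapeDel, Nat.card_Icc] using this
  -- Part 1 : α ℓ = shapeDel ℓ
  have h1 : α ℓ = shapeDel n α F ℓ := by
    by_contra hne
    have hlt : shapeDel n α F ℓ < α ℓ := lt_of_le_of_ne hβℓ (Ne.symm hne)
    set i := shapeDel n α F ℓ + 1 with hi
    have hiℓ : i ≤ α ℓ := hlt
    have hir : i + 1 ≤ α r := by omega
    have hFℓi : F ℓ i = 1 := by
      have h1' : 1 ≤ F ℓ i := hpos ℓ i hiℓ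
      have h2' : ¬ 2 ≤ F ℓ i := by
        rw [ssaf_mem n α σ F ⟨hpos, hbase, hdesc, _hA, hB⟩ ℓ i (by omega) hiℓ]
        omega
      omega
    have hFri : F r (i + 1) = 1 := by
      have h1' : 1 ≤ F r (i + 1) := hpos r (i + 1) hir
      have h2' : ¬ 2 ≤ F r (i + 1) := by
        rw [ssaf_mem n α σ F ⟨hpos, hbase, hdesc, _hA, hB⟩ r (i + 1) (by omega) hir]
        omega
      omega
    have := hB ℓ r i hlr hα hiℓ hir
    exact this ⟨by omega, by rw [hFℓi]; exact hpos r i (by omega)⟩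
  refine ⟨h1, ?_⟩
  -- Part 2 : σ r < σ ℓ
  by_contra hσ
  push_neg at hσ
  have hbase' : F ℓ 0 ≤ F r 0 := by rw [hbase, hbase]; omega
  have key : ∀ i, i ≤ α ℓ → F ℓ i < F r (i + 1) := by
    intro i
    induction i with
    | zero =>
      intro _
      have := hB ℓ r 0 hlr hα (Nat.zero_le _) (by omega)
      by_contra h
      push_neg at h
      exact this ⟨h, hbase'⟩
    | succ i ih =>
      intro hle
      have hprev := ih (by omega)
      have hd : F ℓ (i + 1) ≤ F ℓ i := hdesc ℓ i hle
      have := hB ℓ r (i + 1) hlr hα hle (by omega)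
      by_contra h
      push_neg at h
      exact this ⟨h, by omega⟩
  have hend := key (α ℓ) (le_refl _)
  have hp : 1 ≤ F ℓ (α ℓ) := hpos ℓ (α ℓ) (le_refl _)
  have h2' : 2 ≤ F r (α ℓ + 1) := by omega
  have := (ssaf_mem n α σ F ⟨hpos, hbase, hdesc, _hA, hB⟩ r (α ℓ + 1) (by omega) (by omega)).mp h2'
  omega
end

section
/- If F is an SSAF of shape α with basement σ and β is the shape obtained by deleting all non-basement 1-cells from F, then β is σ-extendable to α. -/
/-- `β` is `σ`-extendable to `α` (Definition 3.3). -/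
def SigmaExtendable (n : ℕ) (σ : Equiv.Perm (Fin n)) (β α : Fin n → ℕ) : Prop :=
  (∀ i, β i ≤ α i) ∧
  ∀ ℓ r : Fin n, ℓ < r →
    (α r ≤ α ℓ → β r ≤ β ℓ → α r ≤ β ℓ) ∧
    (α ℓ < α r → β ℓ < β r → α ℓ < β r) ∧
    (α r ≤ α ℓ → β ℓ < β r → α r = β r ∧ (σ ℓ : ℕ) < (σ r : ℕ)) ∧
    (α ℓ < α r → β r ≤ β ℓ → α ℓ = β ℓ ∧ (σ r : ℕ) < (σ ℓ : ℕ))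

theorem stmt7 (n : ℕ) (α : Fin n → ℕ) (σ : Equiv.Perm (Fin n)) (F : Fin n → ℕ → ℕ)
    (hF : IsSSAF n α σ F) :
    SigmaExtendable n σ (shapeDel n α F) α := by
  obtain ⟨hpos, hbase, hdec, hA, hB⟩ := hF
  set β := shapeDel n α F with hβdef
  have mono : ∀ i : Fin n, ∀ j k : ℕ, j ≤ k → k ≤ α i → F i k ≤ F i j := by
    intro i j k hjk hk
    induction k with
    | zero => simp [Nat.le_zero.mp hjk]
    | succ k ih =>
      rcases Nat.eq_or_lt_of_le hjk with h | h
      · rw [h]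
      · exact le_trans (hdec i k hk) (ih (by omega) (by omega))
  have hβle : ∀ i, β i ≤ α i := by
    intro i
    have h := Finset.card_filter_le (Finset.Icc 1 (α i)) (fun j => 2 ≤ F i j)
    simpa [hβdef, shapeDel, Nat.card_Icc] using h
  have key : ∀ (i : Fin n) (j : ℕ), 1 ≤ j → j ≤ α i → (2 ≤ F i j ↔ j ≤ β i) := by
    intro i j hj1 hjα
    constructor
    · intro h2
      have hsub : Finset.Icc 1 j ⊆ (Finset.Icc 1 (α i)).filter (fun k => 2 ≤ F i k) := by
        intro k hk
        simp only [Finset.mem_Icc] at hk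
        refine Finset.mem_filter.mpr ⟨Finset.mem_Icc.mpr ⟨hk.1, le_trans hk.2 hjα⟩, ?_⟩
        exact le_trans h2 (mono i k j hk.2 hjα)
      have := Finset.card_le_card hsub
      simpa [hβdef, shapeDel, Nat.card_Icc] using this
    · intro hjβ
      by_contra hlt
      have hFj : F i j ≤ 1 := by omega
      have hsub : (Finset.Icc 1 (α i)).filter (fun k => 2 ≤ F i k) ⊆ Finset.Icc 1 (j - 1) := by
        intro k hk
        obtain ⟨hk1, hk2⟩ := Finset.mem_filter.mp hk
        simp only [Finset.mem_Icc] at hk1 ⊢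
        refine ⟨hk1.1, ?_⟩
        by_contra hkj
        have : F i k ≤ F i j := mono i j k (by omega) hk1.2
        omega
      have := Finset.card_le_card hsub
      rw [Nat.card_Icc] at this
      have : β i ≤ j - 1 := by simpa [hβdef, shapeDel] using this
      omega
  have htwo : ∀ (i : Fin n) (j : ℕ), 1 ≤ j → j ≤ β i → 2 ≤ F i j := by
    intro i j h1 h2
    exact (key i j h1 (le_trans h2 (hβle i))).mpr h2
  have hone : ∀ (i : Fin n) (j : ℕ), β i < j → j ≤ α i → F i j = 1 := by
    intro i j h1 h2
    have hp := hpos i j h2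
    have := key i j (by omega) h2
    omega
  refine ⟨hβle, ?_⟩
  intro ℓ r hlr
  refine ⟨?_, ?_, ?_, ?_⟩
  · -- (1)
    intro hα hβ
    by_contra h
    push_neg at h
    have hi : β ℓ + 1 ≤ α r := by omega
    refine hA ℓ r (β ℓ) hlr hα hi ⟨?_, ?_⟩
    · have h1 : F ℓ (β ℓ + 1) = 1 := hone ℓ (β ℓ + 1) (by omega) (by omega)
      have h2 : 1 ≤ F r (β ℓ + 1) := hpos r (β ℓ + 1) hi
      omega
    · have h1 : F r (β ℓ + 1) = 1 := hone r (β ℓ + 1) (by omega) hi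
      have h2 : 1 ≤ F ℓ (β ℓ) := hpos ℓ (β ℓ) (by omega)
      omega
  · -- (2)
    intro hα hβ
    by_contra h
    push_neg at h
    refine hB ℓ r (β r) hlr hα h (by omega) ⟨?_, ?_⟩
    · have h1 : F r (β r + 1) = 1 := hone r (β r + 1) (by omega) (by omega)
      have h2 : 1 ≤ F ℓ (β r) := hpos ℓ (β r) h
      omega
    · have h1 : F ℓ (β r) = 1 := hone ℓ (β r) (by omega) h
      have h2 : 1 ≤ F r (β r) := hpos r (β r) (by omega)
      omega
  · -- (3)
    intro hα hβ
    have hαβr : α r = β r := by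
      by_contra h
      have hβr : β r < α r := lt_of_le_of_ne (hβle r) (by omega)
      refine hA ℓ r (β r) hlr hα (by omega) ⟨?_, ?_⟩
      · have h1 : F ℓ (β r + 1) = 1 := hone ℓ (β r + 1) (by omega) (by omega)
        have h2 : 1 ≤ F r (β r + 1) := hpos r (β r + 1) (by omega)
        omega
      · have h1 : F r (β r + 1) = 1 := hone r (β r + 1) (by omega) (by omega)
        have h2 : 1 ≤ F ℓ (β r) := hpos ℓ (β r) (by omega)
        omega
    refine ⟨hαβr, ?_⟩
    -- downward induction: F ℓ (β ℓ - k) < F r (β ℓ - k + 1) for k ≤ β ℓ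
    have claim : ∀ k, k ≤ β ℓ → F ℓ (β ℓ - k) < F r (β ℓ - k + 1) := by
      intro k
      induction k with
      | zero =>
        intro _
        simp only [Nat.sub_zero]
        by_contra h
        push_neg at h
        refine hA ℓ r (β ℓ) hlr hα (by omega) ⟨?_, h⟩
        have h1 : F ℓ (β ℓ + 1) = 1 := hone ℓ (β ℓ + 1) (by omega) (by omega)
        have h2 : 2 ≤ F r (β ℓ + 1) := htwo r (β ℓ + 1) (by omega) (by omega)
        omega
      | succ k ih =>
        intro hk
        have IH := ih (by omega)
        set i := β ℓ - (k + 1) with hi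
        have hieq : β ℓ - k = i + 1 := by omega
        rw [hieq] at IH
        by_contra h
        push_neg at h
        refine hA ℓ r i hlr hα (by omega) ⟨?_, h⟩
        have h2 : F r (i + 1 + 1) ≤ F r (i + 1) := hdec r (i + 1) (by omega)
        omega
    have h0 := claim (β ℓ) (le_refl _)
    simp only [Nat.sub_self] at h0
    have h1 : F r (0 + 1) ≤ F r 0 := hdec r 0 (by omega)
    have hb1 := hbase ℓ
    have hb2 := hbase r
    omega
  · -- (4)
    intro hα hβ
    have hαβl : α ℓ = β ℓ := by
      by_contra h
      have hβl : β ℓ < α ℓ := lt_of_le_of_ne (hβle ℓ) (by omega)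
      refine hB ℓ r (α ℓ) hlr hα (le_refl _) (by omega) ⟨?_, ?_⟩
      · have h1 : F r (α ℓ + 1) = 1 := hone r (α ℓ + 1) (by omega) (by omega)
        have h2 : 1 ≤ F ℓ (α ℓ) := hpos ℓ (α ℓ) (le_refl _)
        omega
      · have h1 : F ℓ (α ℓ) = 1 := hone ℓ (α ℓ) (by omega) (le_refl _)
        have h2 : 1 ≤ F r (α ℓ) := hpos r (α ℓ) (by omega)
        omega
    refine ⟨hαβl, ?_⟩
    have claim : ∀ k, k ≤ α ℓ → F r (α ℓ - k) < F ℓ (α ℓ - k) := by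
      intro k
      induction k with
      | zero =>
        intro _
        simp only [Nat.sub_zero]
        by_contra h
        push_neg at h
        refine hB ℓ r (α ℓ) hlr hα (le_refl _) (by omega) ⟨?_, h⟩
        have h1 : F r (α ℓ + 1) = 1 := hone r (α ℓ + 1) (by omega) (by omega)
        have h2 : 1 ≤ F ℓ (α ℓ) := hpos ℓ (α ℓ) (le_refl _)
        omega
      | succ k ih =>
        intro hk
        have IH := ih (by omega)
        set i := α ℓ - (k + 1) with hi
        have hieq : α ℓ - k = i + 1 := by omega
        rw [hieq] at IH
        by_contra h
        push_neg at h
        refine hB ℓ r i hlr hα (by omega) (by omega) ⟨?_, h⟩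
        have h2 : F ℓ (i + 1) ≤ F ℓ i := hdec ℓ i (by omega)
        omega
    have h0 := claim (α ℓ) (le_refl _)
    simp only [Nat.sub_self] at h0
    have hb1 := hbase ℓ
    have hb2 := hbase r
    omega
end

section
/- Suppose β is σ-extendable to α and F' is an SSAF of shape β with basement σ whose only cells with entry 1 are in the basement. Let F be the filling obtained from F' by adding α_i − β_i cells with entry 1 on top of column i for each i. Then F is an SSAF of shape α with basement σ. -/
/-- In an SSAF, if `ℓ < r`, the column of `ℓ` is strictly shorter, and the basement entry
of `ℓ` is smaller, then column `ℓ` is strictly smaller than column `r` in every common row. -/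
lemma ssaf_colB (n : ℕ) (β : Fin n → ℕ) (σ : Equiv.Perm (Fin n)) (F' : Fin n → ℕ → ℕ)
    (hF' : IsSSAF n β σ F') (ℓ r : Fin n) (hlr : ℓ < r) (hβ : β ℓ < β r)
    (hσ : (σ ℓ : ℕ) < (σ r : ℕ)) : ∀ j, j ≤ β ℓ → F' ℓ j < F' r j := by
  obtain ⟨hpos, hbase, hdesc, hA, hB⟩ := hF'
  intro j
  induction j with
  | zero => intro _; rw [hbase, hbase]; omega
  | succ j ih =>
    intro hj
    have h1 : F' ℓ j < F' r j := ih (by omega)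
    have hBt := hB ℓ r j hlr hβ (by omega) (by omega)
    have hd := hdesc ℓ j (by omega)
    have hd2 := hdesc r j (by omega)
    omega

/-- Strengthening of `ssaf_colB`: entry in column `ℓ` row `j` is even smaller than
the entry in column `r` one row higher. -/
lemma ssaf_colB' (n : ℕ) (β : Fin n → ℕ) (σ : Equiv.Perm (Fin n)) (F' : Fin n → ℕ → ℕ)
    (hF' : IsSSAF n β σ F') (ℓ r : Fin n) (hlr : ℓ < r) (hβ : β ℓ < β r)
    (hσ : (σ ℓ : ℕ) < (σ r : ℕ)) : ∀ j, j ≤ β ℓ → F' ℓ j < F' r (j + 1) := by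
  intro j hj
  have h1 : F' ℓ j < F' r j := ssaf_colB n β σ F' hF' ℓ r hlr hβ hσ j hj
  obtain ⟨hpos, hbase, hdesc, hA, hB⟩ := hF'
  have hBt := hB ℓ r j hlr hβ hj (by omega)
  omega

/-- In an SSAF, if `ℓ < r`, the column of `r` is weakly shorter, and the basement entry
of `r` is smaller, then column `r` is strictly smaller than column `ℓ` in every common row. -/
lemma ssaf_colA (n : ℕ) (β : Fin n → ℕ) (σ : Equiv.Perm (Fin n)) (F' : Fin n → ℕ → ℕ)
    (hF' : IsSSAF n β σ F') (ℓ r : Fin n) (hlr : ℓ < r) (hβ : β r ≤ β ℓ)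
    (hσ : (σ r : ℕ) < (σ ℓ : ℕ)) : ∀ j, j ≤ β r → F' r j < F' ℓ j := by
  obtain ⟨hpos, hbase, hdesc, hA, hB⟩ := hF'
  intro j
  induction j with
  | zero => intro _; rw [hbase, hbase]; omega
  | succ j ih =>
    intro hj
    have h1 : F' r j < F' ℓ j := ih (by omega)
    have hAt := hA ℓ r j hlr hβ hj
    have hd2 := hdesc r j hj
    omega

theorem stmt8 (n : ℕ) (σ : Equiv.Perm (Fin n)) (α β : Fin n → ℕ)
    (hext : SigmaExtendable n σ β α) (F' : Fin n → ℕ → ℕ)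
    (hF' : IsSSAF n β σ F')
    (h1 : ∀ i j, 1 ≤ j → j ≤ β i → F' i j ≠ 1) :
    IsSSAF n α σ (fun i j => if j ≤ β i then F' i j else 1) := by
  obtain ⟨hba, hcond⟩ := hext
  have hF'c := hF'
  obtain ⟨hpos, hbase, hdesc, hA, hB⟩ := hF'c
  refine ⟨?_, ?_, ?_, ?_, ?_⟩
  · intro i j _
    dsimp only
    split_ifs with h
    · exact hpos i j h
    · exact le_refl 1
  · intro i
    simp only [Nat.zero_le, if_true]
    exact hbase i
  · intro i j hj
    dsimp only
    by_cases h2' : j + 1 ≤ β i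
    · rw [if_pos h2', if_pos (by omega : j ≤ β i)]
      exact hdesc i j h2'
    · rw [if_neg h2']
      split_ifs with h3'
      · exact hpos i j h3'
      · exact le_refl 1
  · -- Type A triples
    intro ℓ r i hlr hαrl hi
    obtain ⟨c1, c2, c3, c4⟩ := hcond ℓ r hlr
    dsimp only
    rintro ⟨hle1, hle2⟩
    by_cases hr : i + 1 ≤ β r
    · rw [if_pos hr] at hle1 hle2
      by_cases hlb : β r ≤ β ℓ
      · have hl1 : i + 1 ≤ β ℓ := le_trans hr hlb
        rw [if_pos hl1] at hle1
        rw [if_pos (by omega : i ≤ β ℓ)] at hle2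
        exact hA ℓ r i hlr hlb hr ⟨hle1, hle2⟩
      · push_neg at hlb
        obtain ⟨heq, hσ⟩ := c3 hαrl hlb
        by_cases hil : i ≤ β ℓ
        · rw [if_pos hil] at hle2
          have := ssaf_colB' n β σ F' hF' ℓ r hlr hlb hσ i hil
          omega
        · rw [if_neg hil] at hle2
          have := h1 r (i + 1) (by omega) hr
          have := hpos r (i + 1) hr
          omega
    · -- the cell above in column r is a new 1; column ℓ must still be within β
      have hl1 : i + 1 ≤ β ℓ := by
        by_cases hlb : β r ≤ β ℓ
        · have := c1 hαrl hlb
          omega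
        · push_neg at hlb
          obtain ⟨heq, -⟩ := c3 hαrl hlb
          omega
      rw [if_neg hr, if_pos hl1] at hle1
      have := h1 ℓ (i + 1) (by omega) hl1
      have := hpos ℓ (i + 1) hl1
      omega
  · -- Type B triples
    intro ℓ r i hlr hαlr hi hi1
    obtain ⟨c1, c2, c3, c4⟩ := hcond ℓ r hlr
    dsimp only
    rintro ⟨hle1, hle2⟩
    by_cases hlb : β ℓ < β r
    · have hab : α ℓ < β r := c2 hαlr hlb
      rw [if_pos (by omega : i + 1 ≤ β r)] at hle1
      rw [if_pos (by omega : i ≤ β r)] at hle2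
      by_cases hil : i ≤ β ℓ
      · rw [if_pos hil] at hle1 hle2
        exact hB ℓ r i hlr hlb hil (by omega) ⟨hle1, hle2⟩
      · rw [if_neg hil] at hle1 hle2
        have := h1 r (i + 1) (by omega) (by omega)
        have := hpos r (i + 1) (by omega : i + 1 ≤ β r)
        omega
    · push_neg at hlb
      obtain ⟨heq, hσ⟩ := c4 hαlr hlb
      have hil : i ≤ β ℓ := by omega
      rw [if_pos hil] at hle1 hle2
      by_cases hr : i + 1 ≤ β r
      · rw [if_pos (by omega : i ≤ β r)] at hle2
        have := ssaf_colA n β σ F' hF' ℓ r hlr hlb hσ i (by omega)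
        omega
      · rw [if_neg hr] at hle1
        by_cases hir : i ≤ β r
        · rw [if_pos hir] at hle2
          have := ssaf_colA n β σ F' hF' ℓ r hlr hlb hσ i hir
          omega
        · rw [if_neg hir] at hle2
          -- i ≥ 1 since β r < i
          have := h1 ℓ i (by omega) hil
          have := hpos ℓ i hil
          omega
end

section
/- The map sending F ∈ SSAF_σ(α) to the pair (β, F'), where F' is obtained from F by deleting all non-basement 1-cells and β is the shape of F', is a bijection between SSAF_σ(α) and the set of pairs (β, F') where β is σ-extendable to α and F' ∈ SSAF_σ(β) has no non-basement 1-cells. -/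
/-- The set of SSAFs of shape `α` with basement `σ`, with fillings normalized
to be `0` outside the cells of the diagram. -/
def SSAFSet (n : ℕ) (α : Fin n → ℕ) (σ : Equiv.Perm (Fin n)) : Set (Fin n → ℕ → ℕ) :=
  {F | IsSSAF n α σ F ∧ ∀ i j, α i < j → F i j = 0}

/-- The map deleting all non-basement `1`-cells, recording the new shape. -/
def delMap (n : ℕ) (α : Fin n → ℕ) (F : Fin n → ℕ → ℕ) :
    (Fin n → ℕ) × (Fin n → ℕ → ℕ) :=
  (shapeDel n α F, fun i j => if j ≤ shapeDel n α F i then F i j else 0)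

lemma step_anti {f : ℕ → ℕ} {m : ℕ} (h : ∀ j, j + 1 ≤ m → f (j+1) ≤ f j) :
    ∀ {k j : ℕ}, k ≤ j → j ≤ m → f j ≤ f k := by
  intro k j hkj hjm
  induction j with
  | zero => have : k = 0 := Nat.le_zero.mp hkj; simp [this]
  | succ j ih =>
    rcases Nat.lt_or_ge k (j+1) with h1 | h1
    · exact le_trans (h j hjm) (ih (Nat.lt_succ_iff.mp h1) (Nat.le_of_succ_le hjm))
    · have : k = j + 1 := le_antisymm hkj h1
      simp [this]

lemma ssaf_facts {n : ℕ} {α : Fin n → ℕ} {σ : Equiv.Perm (Fin n)} {F : Fin n → ℕ → ℕ}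
    (hF : IsSSAF n α σ F) :
    (∀ i, shapeDel n α F i ≤ α i) ∧
    (∀ i j, 1 ≤ j → j ≤ shapeDel n α F i → 2 ≤ F i j) ∧
    (∀ i j, shapeDel n α F i < j → j ≤ α i → F i j = 1) := by
  obtain ⟨hpos, hbase, hdec, hA, hB⟩ := hF
  have hcard : ∀ i : Fin n, shapeDel n α F i ≤ α i := by
    intro i
    have := Finset.card_le_card (Finset.filter_subset (fun j => 2 ≤ F i j) (Finset.Icc 1 (α i)))
    simpa [shapeDel] using this
  have hanti : ∀ i : Fin n, ∀ {k j : ℕ}, k ≤ j → j ≤ α i → F i j ≤ F i k := by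
    intro i k j hkj hjm
    exact step_anti (fun j hj => hdec i j hj) hkj hjm
  have hiff : ∀ i : Fin n, ∀ j, 1 ≤ j → j ≤ α i → (2 ≤ F i j ↔ j ≤ shapeDel n α F i) := by
    intro i j h1 hm
    constructor
    · intro hj
      have hsub : Finset.Icc 1 j ⊆ (Finset.Icc 1 (α i)).filter (fun k => 2 ≤ F i k) := by
        intro k hk
        simp only [Finset.mem_Icc] at hk
        simp only [Finset.mem_filter, Finset.mem_Icc]
        exact ⟨⟨hk.1, le_trans hk.2 hm⟩, le_trans hj (hanti i hk.2 hm)⟩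
      calc j = (Finset.Icc 1 j).card := by simp
      _ ≤ _ := Finset.card_le_card hsub
    · intro hj
      by_contra hnot
      have hsub : (Finset.Icc 1 (α i)).filter (fun k => 2 ≤ F i k) ⊆ Finset.Icc 1 (j-1) := by
        intro k hk
        simp only [Finset.mem_filter, Finset.mem_Icc] at hk
        simp only [Finset.mem_Icc]
        refine ⟨hk.1.1, ?_⟩
        by_contra hkk
        push_neg at hkk
        exact hnot (le_trans hk.2 (hanti i (by omega) hk.1.2))
      have := Finset.card_le_card hsub
      simp only [Nat.card_Icc] at this
      have : shapeDel n α F i ≤ j - 1 := by simpa [shapeDel] using this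
      omega
  refine ⟨hcard, ?_, ?_⟩
  · intro i j h1 hj
    exact (hiff i j h1 (le_trans hj (hcard i))).mpr hj
  · intro i j hj hm
    have h1 : 1 ≤ j := by omega
    have := (hiff i j h1 hm)
    have hlt : ¬ (2 ≤ F i j) := fun h => by have := this.mp h; omega
    have hge := hpos i j hm
    omega

lemma stairA {n : ℕ} {α : Fin n → ℕ} {σ : Equiv.Perm (Fin n)} {F : Fin n → ℕ → ℕ}
    (hF : IsSSAF n α σ F) {ℓ r : Fin n} (hlr : ℓ < r)
    (hα : α r ≤ α ℓ) (hβ : shapeDel n α F ℓ < shapeDel n α F r) :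
    ∀ j, j ≤ shapeDel n α F ℓ → F ℓ j < F r (j+1) := by
  obtain ⟨hβα, h2, h1⟩ := ssaf_facts hF
  obtain ⟨hpos, hbase, hdec, hA, hB⟩ := hF
  set bl := shapeDel n α F ℓ with hbl
  set br := shapeDel n α F r with hbr
  have hbrr : br ≤ α r := hβα r
  have haux : ∀ k, F ℓ (bl - k) < F r ((bl - k) + 1) := by
    intro k
    induction k with
    | zero =>
      simp only [Nat.sub_zero]
      have hle : bl + 1 ≤ α r := by omega
      have hfl : F ℓ (bl + 1) = 1 := h1 ℓ (bl + 1) (by omega) (by omega)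
      have hfr : 1 ≤ F r (bl + 1) := hpos r (bl + 1) hle
      have := hA ℓ r bl hlr hα hle
      have hge : 1 ≤ F ℓ bl := hpos ℓ bl (by omega)
      by_contra hcon
      exact this ⟨by omega, by omega⟩
    | succ k ih =>
      rcases Nat.lt_or_ge k bl with hk | hk
      · have hj : bl - (k+1) + 1 = bl - k := by omega
        have hdr : F r (bl - k + 1) ≤ F r (bl - k) := hdec r (bl - k) (by omega)
        have hstep := hA ℓ r (bl - (k+1)) hlr hα (by omega)
        rw [hj] at hstep ⊢
        by_contra hcon
        exact hstep ⟨by omega, by omega⟩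
      · have : bl - (k+1) = bl - k := by omega
        rw [this]; exact ih
  intro j hj
  have := haux (bl - j)
  rwa [show bl - (bl - j) = j by omega] at this

lemma stairB {n : ℕ} {α : Fin n → ℕ} {σ : Equiv.Perm (Fin n)} {F : Fin n → ℕ → ℕ}
    (hF : IsSSAF n α σ F) {ℓ r : Fin n} (hlr : ℓ < r)
    (hα : α ℓ < α r) (hβ : shapeDel n α F r ≤ shapeDel n α F ℓ) :
    shapeDel n α F ℓ = α ℓ ∧ ∀ j, j ≤ shapeDel n α F ℓ → F r j < F ℓ j := by
  obtain ⟨hβα, h2, h1⟩ := ssaf_facts hF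
  obtain ⟨hpos, hbase, hdec, hA, hB⟩ := hF
  set bl := shapeDel n α F ℓ with hbl
  set br := shapeDel n α F r with hbr
  have hbll : bl ≤ α ℓ := hβα ℓ
  have heq : bl = α ℓ := by
    by_contra hne
    have hlt : bl < α ℓ := by omega
    have hfr1 : F r (α ℓ + 1) = 1 := h1 r (α ℓ + 1) (by omega) (by omega)
    have hfl : F ℓ (α ℓ) = 1 := h1 ℓ (α ℓ) hlt (le_refl _)
    have hfr : 1 ≤ F r (α ℓ) := hpos r (α ℓ) (by omega)
    exact hB ℓ r (α ℓ) hlr hα (le_refl _) (by omega) ⟨by omega, by omega⟩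
  refine ⟨heq, ?_⟩
  have haux : ∀ k, F r (bl - k) < F ℓ (bl - k) := by
    intro k
    induction k with
    | zero =>
      simp only [Nat.sub_zero]
      have hfr1 : F r (bl + 1) = 1 := h1 r (bl + 1) (by omega) (by omega)
      have hge : 1 ≤ F ℓ bl := hpos ℓ bl (by omega)
      have := hB ℓ r bl hlr hα (by omega) (by omega)
      by_contra hcon
      exact this ⟨by omega, by omega⟩
    | succ k ih =>
      rcases Nat.lt_or_ge k bl with hk | hk
      · have hj : bl - (k+1) + 1 = bl - k := by omega
        have hdl : F ℓ (bl - k) ≤ F ℓ (bl - (k+1)) := by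
          rw [show bl - k = bl - (k+1) + 1 by omega]
          exact hdec ℓ _ (by omega)
        have hstep := hB ℓ r (bl - (k+1)) hlr hα (by omega) (by omega)
        rw [hj] at hstep
        by_contra hcon
        exact hstep ⟨by omega, by omega⟩
      · have : bl - (k+1) = bl - k := by omega
        rw [this]; exact ih
  intro j hj
  have := haux (bl - j)
  rwa [show bl - (bl - j) = j by omega] at this

lemma stairA' {n : ℕ} {β : Fin n → ℕ} {σ : Equiv.Perm (Fin n)} {F : Fin n → ℕ → ℕ}
    (hF : IsSSAF n β σ F) {ℓ r : Fin n} (hlr : ℓ < r)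
    (hβ : β r ≤ β ℓ) (hσ : (σ r : ℕ) < (σ ℓ : ℕ)) :
    ∀ j, j ≤ β r → F r j < F ℓ j := by
  obtain ⟨hpos, hbase, hdec, hA, hB⟩ := hF
  intro j
  induction j with
  | zero => intro _; rw [hbase ℓ, hbase r]; omega
  | succ j ih =>
    intro hj
    have hQ := ih (by omega)
    have hdr : F r (j+1) ≤ F r j := hdec r j hj
    have := hA ℓ r j hlr hβ hj
    by_contra hcon
    exact this ⟨by omega, by omega⟩

lemma stairB' {n : ℕ} {β : Fin n → ℕ} {σ : Equiv.Perm (Fin n)} {F : Fin n → ℕ → ℕ}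
    (hF : IsSSAF n β σ F) {ℓ r : Fin n} (hlr : ℓ < r)
    (hβ : β ℓ < β r) (hσ : (σ ℓ : ℕ) < (σ r : ℕ)) :
    ∀ j, j ≤ β ℓ → F ℓ j < F r j := by
  obtain ⟨hpos, hbase, hdec, hA, hB⟩ := hF
  intro j
  induction j with
  | zero => intro _; rw [hbase ℓ, hbase r]; omega
  | succ j ih =>
    intro hj
    have hQ := ih (by omega)
    have hdl : F ℓ (j+1) ≤ F ℓ j := hdec ℓ j hj
    have := hB ℓ r j hlr hβ (by omega) (by omega)
    by_contra hcon
    exact this ⟨by omega, by omega⟩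

lemma shapeDel_eq {n : ℕ} {α : Fin n → ℕ} {G : Fin n → ℕ → ℕ} {β : Fin n → ℕ}
    (hβα : ∀ i, β i ≤ α i)
    (h2 : ∀ i j, 1 ≤ j → j ≤ β i → 2 ≤ G i j)
    (h1 : ∀ i j, β i < j → j ≤ α i → G i j = 1) :
    shapeDel n α G = β := by
  funext i
  have hfil : (Finset.Icc 1 (α i)).filter (fun j => 2 ≤ G i j) = Finset.Icc 1 (β i) := by
    ext j
    simp only [Finset.mem_filter, Finset.mem_Icc]
    constructor
    · rintro ⟨⟨ha, hb⟩, hc⟩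
      refine ⟨ha, ?_⟩
      by_contra hcon
      have := h1 i j (by omega) hb
      omega
    · rintro ⟨ha, hb⟩
      exact ⟨⟨ha, le_trans hb (hβα i)⟩, h2 i j ha hb⟩
  rw [shapeDel, hfil, Nat.card_Icc]
  omega

lemma forward_mem {n : ℕ} {α : Fin n → ℕ} {σ : Equiv.Perm (Fin n)} {F : Fin n → ℕ → ℕ}
    (hFm : F ∈ SSAFSet n α σ) :
    delMap n α F ∈ {p : (Fin n → ℕ) × (Fin n → ℕ → ℕ) |
        SigmaExtendable n σ p.1 α ∧ p.2 ∈ SSAFSet n p.1 σ ∧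
        ∀ i j, 1 ≤ j → j ≤ p.1 i → p.2 i j ≠ 1} := by
  obtain ⟨hS, hz⟩ := hFm
  obtain ⟨hβα, h2, h1⟩ := ssaf_facts hS
  obtain ⟨hpos, hbase, hdec, hA, hB⟩ := hS
  have hS' : IsSSAF n α σ F := ⟨hpos, hbase, hdec, hA, hB⟩
  have h3shape : ∀ ℓ r : Fin n, ℓ < r → α r ≤ α ℓ → shapeDel n α F ℓ < shapeDel n α F r → α r = shapeDel n α F r := by
    intro ℓ r hlr hα hb
    have hbr := hβα r
    have hbl := hβα ℓ
    by_contra hne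
    have e1 := h1 ℓ (shapeDel n α F r + 1) (by omega) (by omega)
    have e2 := h1 r (shapeDel n α F r + 1) (by omega) (by omega)
    have e3 := hpos ℓ (shapeDel n α F r) (by omega)
    exact hA ℓ r (shapeDel n α F r) hlr hα (by omega) ⟨by omega, by omega⟩
  have hext : SigmaExtendable n σ (shapeDel n α F) α := by
    refine ⟨hβα, fun ℓ r hlr => ⟨?_, ?_, ?_, ?_⟩⟩
    · intro hα hb
      have hbr := hβα r
      have hbl := hβα ℓ
      by_contra hcon
      push_neg at hcon
      have e1 := h1 ℓ (shapeDel n α F ℓ + 1) (by omega) (by omega)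
      have e2 := h1 r (shapeDel n α F ℓ + 1) (by omega) (by omega)
      have e3 := hpos ℓ (shapeDel n α F ℓ) (by omega)
      exact hA ℓ r (shapeDel n α F ℓ) hlr hα (by omega) ⟨by omega, by omega⟩
    · intro hα hb
      have hbr := hβα r
      have hbl := hβα ℓ
      by_contra hcon
      push_neg at hcon
      have e1 := h1 r (shapeDel n α F r + 1) (by omega) (by omega)
      have e2 := h1 ℓ (shapeDel n α F r) (by omega) (by omega)
      have e3 := hpos r (shapeDel n α F r) (by omega)
      exact hB ℓ r (shapeDel n α F r) hlr hα (by omega) (by omega) ⟨by omega, by omega⟩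
    · intro hα hb
      have hbr := hβα r
      refine ⟨h3shape ℓ r hlr hα hb, ?_⟩
      have hst : F ℓ 0 < F r 1 := by simpa using stairA hS' hlr hα hb 0 (by omega)
      have hdr : F r 1 ≤ F r 0 := hdec r 0 (by omega)
      have b1 := hbase ℓ
      have b2 := hbase r
      omega
    · intro hα hb
      obtain ⟨hsh, hchain⟩ := stairB hS' hlr hα hb
      refine ⟨hsh.symm, ?_⟩
      have := hchain 0 (by omega)
      have b1 := hbase ℓ
      have b2 := hbase r
      omega
  simp only [Set.mem_setOf_eq, delMap, SSAFSet, Set.mem_setOf_eq]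
  refine ⟨hext, ⟨⟨?_, ?_, ?_, ?_, ?_⟩, ?_⟩, ?_⟩
  · intro i j hj
    beta_reduce
    rw [if_pos hj]
    exact hpos i j (le_trans hj (hβα i))
  · intro i
    beta_reduce
    rw [if_pos (Nat.zero_le _)]
    exact hbase i
  · intro i j hj
    beta_reduce
    rw [if_pos hj, if_pos (by omega)]
    exact hdec i j (le_trans hj (hβα i))
  · intro ℓ r i hlr hb hi
    have hbr := hβα r
    have hbl := hβα ℓ
    beta_reduce
    rw [if_pos hi, if_pos (by omega : i + 1 ≤ shapeDel n α F ℓ), if_pos (by omega : i ≤ shapeDel n α F ℓ)]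
    rcases le_or_gt (α r) (α ℓ) with hα | hα
    · exact hA ℓ r i hlr hα (by omega)
    · rintro ⟨c1, c2⟩
      have hchain := (stairB hS' hlr hα hb).2 (i+1) (by omega)
      omega
  · intro ℓ r i hlr hb hi hi1
    have hbr := hβα r
    have hbl := hβα ℓ
    beta_reduce
    rw [if_pos hi1, if_pos hi, if_pos (by omega : i ≤ shapeDel n α F r)]
    rcases lt_or_ge (α ℓ) (α r) with hα | hα
    · exact hB ℓ r i hlr hα (by omega) (by omega)
    · rintro ⟨c1, c2⟩
      have hchain := stairA hS' hlr hα hb i hi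
      omega
  · intro i j hj
    beta_reduce
    rw [if_neg (by omega)]
  · intro i j hj1 hj2
    beta_reduce
    rw [if_pos hj2]
    have := h2 i j hj1 hj2
    omega

def extFill (n : ℕ) (β α : Fin n → ℕ) (F' : Fin n → ℕ → ℕ) : Fin n → ℕ → ℕ :=
  fun i j => if j ≤ β i then F' i j else if j ≤ α i then 1 else 0

lemma backward_mem {n : ℕ} {α β : Fin n → ℕ} {σ : Equiv.Perm (Fin n)} {F' : Fin n → ℕ → ℕ}
    (hext : SigmaExtendable n σ β α) (hF'm : F' ∈ SSAFSet n β σ)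
    (hno : ∀ i j, 1 ≤ j → j ≤ β i → F' i j ≠ 1) :
    extFill n β α F' ∈ SSAFSet n α σ ∧ delMap n α (extFill n β α F') = (β, F') := by
  obtain ⟨⟨hpos, hbase, hdec, hA, hB⟩, hz⟩ := hF'm
  have hS' : IsSSAF n β σ F' := ⟨hpos, hbase, hdec, hA, hB⟩
  obtain ⟨hβα, hpair⟩ := hext
  have h2 : ∀ i j, 1 ≤ j → j ≤ β i → 2 ≤ F' i j := by
    intro i j h1 hj
    have := hpos i j hj
    have := hno i j h1 hj
    omega
  have hGa : ∀ i j, j ≤ β i → extFill n β α F' i j = F' i j := by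
    intro i j hj; simp [extFill, hj]
  have hGb : ∀ i j, β i < j → j ≤ α i → extFill n β α F' i j = 1 := by
    intro i j ha hb
    show (if j ≤ β i then F' i j else if j ≤ α i then 1 else 0) = 1
    rw [if_neg (by omega), if_pos hb]
  have hGc : ∀ i j, α i < j → extFill n β α F' i j = 0 := by
    intro i j ha
    have := hβα i
    show (if j ≤ β i then F' i j else if j ≤ α i then 1 else 0) = 0
    rw [if_neg (by omega), if_neg (by omega)]
  have hmem : extFill n β α F' ∈ SSAFSet n α σ := by
    refine ⟨⟨?_, ?_, ?_, ?_, ?_⟩, hGc⟩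
    · intro i j hj
      rcases le_or_gt j (β i) with h | h
      · rw [hGa i j h]; exact hpos i j h
      · rw [hGb i j h hj]
    · intro i
      rw [hGa i 0 (Nat.zero_le _)]; exact hbase i
    · intro i j hj
      rcases le_or_gt (j+1) (β i) with h | h
      · rw [hGa i (j+1) h, hGa i j (by omega)]; exact hdec i j h
      · rw [hGb i (j+1) h hj]
        rcases le_or_gt j (β i) with h' | h'
        · rw [hGa i j h']; exact hpos i j h'
        · rw [hGb i j h' (by omega)]
    · -- type A for α
      intro ℓ r i hlr hα hi
      obtain ⟨e1, e2, e3, e4⟩ := hpair ℓ r hlr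
      rintro ⟨c1, c2⟩
      have hbr := hβα r
      have hbl := hβα ℓ
      rcases le_or_gt (β r) (β ℓ) with hc | hc
      · rcases le_or_gt (i+1) (β r) with hi1 | hi1
        · rw [hGa ℓ (i+1) (by omega), hGa r (i+1) hi1] at c1
          rw [hGa r (i+1) hi1, hGa ℓ i (by omega)] at c2
          exact hA ℓ r i hlr hc hi1 ⟨c1, c2⟩
        · have hgr : extFill n β α F' r (i+1) = 1 := hGb r (i+1) hi1 hi
          rcases le_or_gt (i+1) (β ℓ) with hil | hil
          · have := h2 ℓ (i+1) (by omega) hil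
            rw [hGa ℓ (i+1) hil, hgr] at c1
            omega
          · have := e1 hα hc
            omega
      · obtain ⟨hshape, hσ⟩ := e3 hα hc
        have hi1 : i + 1 ≤ β r := by omega
        have hgr1 : extFill n β α F' r (i+1) = F' r (i+1) := hGa r (i+1) hi1
        rcases le_or_gt i (β ℓ) with hil | hil
        · have hQ := stairB' hS' hlr hc hσ i hil
          have htrip := hB ℓ r i hlr hc hil hi1
          have hgl : extFill n β α F' ℓ i = F' ℓ i := hGa ℓ i hil
          exact htrip ⟨by omega, by omega⟩
        · have hgl : extFill n β α F' ℓ i = 1 := hGb ℓ i hil (by omega)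
          have := h2 r (i+1) (by omega) hi1
          omega
    · -- type B for α
      intro ℓ r i hlr hα hi hi1
      obtain ⟨e1, e2, e3, e4⟩ := hpair ℓ r hlr
      rintro ⟨c1, c2⟩
      have hbr := hβα r
      have hbl := hβα ℓ
      rcases lt_or_ge (β ℓ) (β r) with hc | hc
      · have hvr := e2 hα hc
        rcases le_or_gt i (β ℓ) with hil | hil
        · rw [hGa r (i+1) (by omega), hGa ℓ i hil] at c1
          rw [hGa ℓ i hil, hGa r i (by omega)] at c2
          exact hB ℓ r i hlr hc hil (by omega) ⟨c1, c2⟩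
        · have hgl : extFill n β α F' ℓ i = 1 := hGb ℓ i hil hi
          have hgr : extFill n β α F' r (i+1) = F' r (i+1) := hGa r (i+1) (by omega)
          have := h2 r (i+1) (by omega) (by omega)
          omega
      · obtain ⟨hshape, hσ⟩ := e4 hα hc
        rcases le_or_gt i (β r) with hir | hir
        · have hR := stairA' hS' hlr hc hσ i hir
          rw [hGa ℓ i (by omega), hGa r i hir] at c2
          omega
        · have hgr : extFill n β α F' r i = 1 := hGb r i hir (by omega)
          have h2l := h2 ℓ i (by omega) (by omega)
          have hgl : extFill n β α F' ℓ i = F' ℓ i := hGa ℓ i (by omega)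
          omega
  have h2G : ∀ i j, 1 ≤ j → j ≤ β i → 2 ≤ extFill n β α F' i j := by
    intro i j h1 hj
    rw [hGa i j hj]; exact h2 i j h1 hj
  have hsd : shapeDel n α (extFill n β α F') = β := shapeDel_eq hβα h2G hGb
  refine ⟨hmem, ?_⟩
  unfold delMap
  rw [hsd]
  refine congrArg (Prod.mk β) ?_
  funext i j
  rcases le_or_gt j (β i) with hj | hj
  · rw [if_pos hj]; exact hGa i j hj
  · rw [if_neg (by omega)]; exact (hz i j hj).symm

theorem stmt9 (n : ℕ) (α : Fin n → ℕ) (σ : Equiv.Perm (Fin n)) :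
    Set.BijOn (delMap n α) (SSAFSet n α σ)
      {p : (Fin n → ℕ) × (Fin n → ℕ → ℕ) |
        SigmaExtendable n σ p.1 α ∧ p.2 ∈ SSAFSet n p.1 σ ∧
        ∀ i j, 1 ≤ j → j ≤ p.1 i → p.2 i j ≠ 1} := by
  refine ⟨?_, ?_, ?_⟩
  · intro F hF
    exact forward_mem hF
  · intro F hFm G hGm heq
    obtain ⟨hSF, hzF⟩ := hFm
    obtain ⟨hSG, hzG⟩ := hGm
    obtain ⟨hβαF, h2F, h1F⟩ := ssaf_facts hSF
    obtain ⟨hβαG, h2G, h1G⟩ := ssaf_facts hSG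
    have h1 : shapeDel n α F = shapeDel n α G := congrArg Prod.fst heq
    have h2 : (delMap n α F).2 = (delMap n α G).2 := congrArg Prod.snd heq
    funext i j
    rcases le_or_gt j (shapeDel n α F i) with hj | hj
    · have h3 := congrFun (congrFun h2 i) j
      simp only [delMap] at h3
      rw [if_pos hj, if_pos (by rw [← h1]; exact hj)] at h3
      exact h3
    · rcases le_or_gt j (α i) with hja | hja
      · rw [h1F i j hj hja, h1G i j (by rw [← h1]; exact hj) hja]
      · rw [hzF i j hja, hzG i j hja]
  · intro p hp
    obtain ⟨hext, hF'm, hno⟩ := hp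
    obtain ⟨hmem, heq⟩ := backward_mem hext hF'm hno
    exact ⟨extFill n p.1 α p.2, hmem, by rw [heq]⟩
end

section
/- For a weak composition α of length n and σ ∈ S_n, the permuted-basement Demazure atom satisfies the decomposition 𝒜_α^σ(x_1,...,x_n) = Σ_β x_1^{|α|−|β|} · 𝒜_β^σ(0, x_2, ..., x_n), where the sum ranges over all weak compositions β that are σ-extendable to α. -/
namespace Aux

variable {n : ℕ}

lemma antitone_col {α : Fin n → ℕ} {σ : Equiv.Perm (Fin n)} {F : Fin n → ℕ → ℕ}
    (hF : IsSSAF n α σ F) (i : Fin n) :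
    ∀ {j k : ℕ}, j ≤ k → k ≤ α i → F i k ≤ F i j := by
  intro j k hjk hk
  induction k with
  | zero => have : j = 0 := by omega
            simp [this]
  | succ m ih =>
    rcases Nat.eq_or_lt_of_le hjk with h | h
    · subst h; exact le_rfl
    · exact le_trans (hF.2.2.1 i m hk) (ih (by omega) (by omega))

/-- the length of the ≥2 part of column i -/
def colLen (α : Fin n → ℕ) (F : Fin n → ℕ → ℕ) : Fin n → ℕ :=
  fun i => Nat.findGreatest (fun j => 2 ≤ F i j) (α i)

lemma colLen_le (α : Fin n → ℕ) (F : Fin n → ℕ → ℕ) (i : Fin n) : colLen α F i ≤ α i :=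
  Nat.findGreatest_le _

lemma two_le_of_le_colLen {α : Fin n → ℕ} {σ : Equiv.Perm (Fin n)} {F : Fin n → ℕ → ℕ}
    (hF : IsSSAF n α σ F) {i : Fin n} {j : ℕ} (h1 : 1 ≤ j) (h2 : j ≤ colLen α F i) :
    2 ≤ F i j := by
  have hb : colLen α F i ≤ α i := colLen_le α F i
  have hc : 2 ≤ F i (colLen α F i) :=
    ((Nat.findGreatest_eq_iff.mp (rfl : colLen α F i = _)).2.1 (by omega))
  exact le_trans hc (antitone_col hF i h2 hb)

lemma eq_one_of_colLen_lt {α : Fin n → ℕ} {σ : Equiv.Perm (Fin n)} {F : Fin n → ℕ → ℕ}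
    (hF : IsSSAF n α σ F) {i : Fin n} {j : ℕ} (h1 : colLen α F i < j) (h2 : j ≤ α i) :
    F i j = 1 := by
  have hn : ¬ 2 ≤ F i j :=
    (Nat.findGreatest_eq_iff.mp (rfl : colLen α F i = _)).2.2 h1 h2
  have := hF.1 i j h2
  omega

end Aux

namespace Aux

variable {n : ℕ} {α : Fin n → ℕ} {σ : Equiv.Perm (Fin n)} {F : Fin n → ℕ → ℕ}

/-- Chain A: αr ≤ αℓ and colLen ℓ < colLen r force F ℓ i < F r (i+1) for i ≤ colLen ℓ. -/
lemma chainA (hF : IsSSAF n α σ F) {ℓ r : Fin n} (hlr : ℓ < r) (hα : α r ≤ α ℓ)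
    (hb : colLen α F ℓ < colLen α F r) :
    ∀ i, i ≤ colLen α F ℓ → F ℓ i < F r (i + 1) := by
  set p := colLen α F ℓ with hp
  set q := colLen α F r with hq
  have hqr : q ≤ α r := colLen_le α F r
  have key : ∀ d i, i + d = p → F ℓ i < F r (i + 1) := by
    intro d
    induction d with
    | zero =>
      intro i hi
      have hA := hF.2.2.2.1 ℓ r i hlr hα (by omega)
      have h1 : F ℓ (i + 1) = 1 := eq_one_of_colLen_lt hF (by omega) (by omega)
      have h2 : 2 ≤ F r (i + 1) := two_le_of_le_colLen hF (by omega) (by omega)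
      have h3 : 1 ≤ F ℓ i := hF.1 ℓ i (by omega)
      omega
    | succ d ih =>
      intro i hi
      have hih := ih (i + 1) (by omega)
      have hA := hF.2.2.2.1 ℓ r i hlr hα (by omega)
      have hmono : F r (i + 1 + 1) ≤ F r (i + 1) :=
        antitone_col hF r (by omega) (by omega)
      omega
  intro i hi
  exact key (p - i) i (by omega)

/-- Chain B: αℓ < αr and colLen r ≤ colLen ℓ force F r i < F ℓ i for i ≤ colLen r. -/
lemma chainB (hF : IsSSAF n α σ F) {ℓ r : Fin n} (hlr : ℓ < r) (hα : α ℓ < α r)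
    (hb : colLen α F r ≤ colLen α F ℓ) :
    ∀ i, i ≤ colLen α F r → F r i < F ℓ i := by
  set p := colLen α F ℓ with hp
  set q := colLen α F r with hq
  have hpl : p ≤ α ℓ := colLen_le α F ℓ
  have hqr : q ≤ α r := colLen_le α F r
  have key : ∀ d i, i + d = q → F r i < F ℓ i := by
    intro d
    induction d with
    | zero =>
      intro i hi
      have hB := hF.2.2.2.2 ℓ r i hlr hα (by omega) (by omega)
      have h1 : F r (i + 1) = 1 := eq_one_of_colLen_lt hF (by omega) (by omega)
      have h3 : 1 ≤ F ℓ i := hF.1 ℓ i (by omega)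
      omega
    | succ d ih =>
      intro i hi
      have hih := ih (i + 1) (by omega)
      have hB := hF.2.2.2.2 ℓ r i hlr hα (by omega) (by omega)
      have hmono : F ℓ (i + 1) ≤ F ℓ i := antitone_col hF ℓ (by omega) (by omega)
      omega
  intro i hi
  exact key (q - i) i (by omega)

/-- Chain C: for an SSAF `G` of shape β with βℓ < βr and smaller left basement,
`G ℓ j < G r (j+1)` for j ≤ βℓ. -/
lemma chainC {β : Fin n → ℕ} {G : Fin n → ℕ → ℕ} (hG : IsSSAF n β σ G)
    {ℓ r : Fin n} (hlr : ℓ < r) (hb : β ℓ < β r) (h0 : G ℓ 0 < G r 0) :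
    ∀ j, j ≤ β ℓ → G ℓ j < G r (j + 1) := by
  intro j
  induction j with
  | zero =>
    intro _
    have hB := hG.2.2.2.2 ℓ r 0 hlr hb (by omega) (by omega)
    omega
  | succ m ih =>
    intro hm
    have hih := ih (by omega)
    have hB := hG.2.2.2.2 ℓ r (m + 1) hlr hb (by omega) (by omega)
    have hmono : G ℓ (m + 1) ≤ G ℓ m := antitone_col hG ℓ (by omega) (by omega)
    omega

/-- Chain D: for an SSAF `G` of shape β with βr ≤ βℓ and smaller right basement,
`G r j < G ℓ j` for j ≤ βr. -/
lemma chainD {β : Fin n → ℕ} {G : Fin n → ℕ → ℕ} (hG : IsSSAF n β σ G)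
    {ℓ r : Fin n} (hlr : ℓ < r) (hb : β r ≤ β ℓ) (h0 : G r 0 < G ℓ 0) :
    ∀ j, j ≤ β r → G r j < G ℓ j := by
  intro j
  induction j with
  | zero => intro _; exact h0
  | succ m ih =>
    intro hm
    have hih := ih (by omega)
    have hA := hG.2.2.2.1 ℓ r m hlr hb (by omega)
    have hmono : G r (m + 1) ≤ G r m := antitone_col hG r (by omega) (by omega)
    omega

end Aux

namespace Aux

variable {n : ℕ} {α : Fin n → ℕ} {σ : Equiv.Perm (Fin n)} {F : Fin n → ℕ → ℕ}

/-- Claim 1: the column lengths of the ≥2 parts are σ-extendable to α. -/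
lemma extendable_colLen (hF : IsSSAF n α σ F) :
    SigmaExtendable n σ (colLen α F) α := by
  refine ⟨fun i => colLen_le α F i, fun ℓ r hlr => ?_⟩
  have hpl : colLen α F ℓ ≤ α ℓ := colLen_le α F ℓ
  have hqr : colLen α F r ≤ α r := colLen_le α F r
  refine ⟨?_, ?_, ?_, ?_⟩
  · -- (1) αr ≤ αℓ, br ≤ bℓ → αr ≤ bℓ
    intro hα hb
    by_contra hc
    push_neg at hc
    -- bℓ < αr ≤ αℓ
    have hA := hF.2.2.2.1 ℓ r (colLen α F ℓ) hlr hα (by omega)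
    have h1 : F ℓ (colLen α F ℓ + 1) = 1 := eq_one_of_colLen_lt hF (by omega) (by omega)
    have h2 : F r (colLen α F ℓ + 1) = 1 := eq_one_of_colLen_lt hF (by omega) (by omega)
    have h3 : 1 ≤ F ℓ (colLen α F ℓ) := hF.1 ℓ (colLen α F ℓ) (by omega)
    omega
  · -- (2) αℓ < αr, bℓ < br → αℓ < br
    intro hα hb
    by_contra hc
    push_neg at hc
    -- br ≤ αℓ, and bℓ < br ≤ αℓ < αr
    have hB := hF.2.2.2.2 ℓ r (colLen α F r) hlr hα (by omega) (by omega)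
    have h1 : F ℓ (colLen α F r) = 1 := eq_one_of_colLen_lt hF (by omega) (by omega)
    have h2 : F r (colLen α F r + 1) = 1 := eq_one_of_colLen_lt hF (by omega) (by omega)
    have h3 : 1 ≤ F r (colLen α F r) := hF.1 r (colLen α F r) (by omega)
    omega
  · -- (3) αr ≤ αℓ, bℓ < br → αr = br ∧ σℓ < σr
    intro hα hb
    have heq : α r = colLen α F r := by
      by_contra hc
      -- br < αr
      have hbr : colLen α F r < α r := by omega
      have hA := hF.2.2.2.1 ℓ r (colLen α F r) hlr hα (by omega)
      have h1 : F ℓ (colLen α F r + 1) = 1 := eq_one_of_colLen_lt hF (by omega) (by omega)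
      have h2 : F r (colLen α F r + 1) = 1 := eq_one_of_colLen_lt hF (by omega) (by omega)
      have h3 : 1 ≤ F ℓ (colLen α F r) := hF.1 ℓ (colLen α F r) (by omega)
      omega
    refine ⟨heq, ?_⟩
    have hch := chainA hF hlr hα hb 0 (by omega)
    have hm : F r (0 + 1) ≤ F r 0 := antitone_col hF r (by omega) (by omega)
    have h0l := hF.2.1 ℓ
    have h0r := hF.2.1 r
    omega
  · -- (4) αℓ < αr, br ≤ bℓ → αℓ = bℓ ∧ σr < σℓ
    intro hα hb
    have heq : α ℓ = colLen α F ℓ := by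
      by_contra hc
      have hbl : colLen α F ℓ < α ℓ := by omega
      have hB := hF.2.2.2.2 ℓ r (colLen α F ℓ + 1) hlr hα (by omega) (by omega)
      have h1 : F ℓ (colLen α F ℓ + 1) = 1 := eq_one_of_colLen_lt hF (by omega) (by omega)
      have h2 : F r (colLen α F ℓ + 1 + 1) = 1 := eq_one_of_colLen_lt hF (by omega) (by omega)
      have h3 : 1 ≤ F r (colLen α F ℓ + 1) := hF.1 r (colLen α F ℓ + 1) (by omega)
      omega
    refine ⟨heq, ?_⟩
    have hch := chainB hF hlr hα hb 0 (by omega)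
    have h0l := hF.2.1 ℓ
    have h0r := hF.2.1 r
    omega

end Aux

namespace Aux

variable {n : ℕ} {α : Fin n → ℕ} {σ : Equiv.Perm (Fin n)} {F : Fin n → ℕ → ℕ}

/-- truncation of a filling to shape β -/
def truncF (β : Fin n → ℕ) (F : Fin n → ℕ → ℕ) : Fin n → ℕ → ℕ :=
  fun i j => if j ≤ β i then F i j else 0

/-- extension of a filling of shape β to shape α by 1s -/
def extF (α β : Fin n → ℕ) (G : Fin n → ℕ → ℕ) : Fin n → ℕ → ℕ :=
  fun i j => if j ≤ β i then G i j else if j ≤ α i then 1 else 0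

lemma truncF_of_le {β : Fin n → ℕ} {i : Fin n} {j : ℕ} (h : j ≤ β i) :
    truncF β F i j = F i j := if_pos h

/-- Claim 2: the truncation is an SSAF of shape colLen, in SSAFSet, with no 1s. -/
lemma trunc_mem (hF : F ∈ SSAFSet n α σ) :
    truncF (colLen α F) F ∈ SSAFSet n (colLen α F) σ ∧
      (∀ i j, 1 ≤ j → j ≤ colLen α F i → 2 ≤ truncF (colLen α F) F i j) := by
  obtain ⟨hF, hz⟩ := hF
  have hb : ∀ i, colLen α F i ≤ α i := colLen_le α F
  have hval : ∀ (i : Fin n) j, j ≤ colLen α F i → truncF (colLen α F) F i j = F i j :=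
    fun i j h => if_pos h
  have htwo : ∀ (i : Fin n) j, 1 ≤ j → j ≤ colLen α F i →
      2 ≤ truncF (colLen α F) F i j := by
    intro i j h1 h2
    rw [hval i j h2]
    exact two_le_of_le_colLen hF h1 h2
  refine ⟨⟨⟨?_, ?_, ?_, ?_, ?_⟩, ?_⟩, htwo⟩
  · intro i j hj
    rw [hval i j hj]
    exact hF.1 i j (le_trans hj (hb i))
  · intro i
    rw [hval i 0 (by omega)]
    exact hF.2.1 i
  · intro i j hj
    rw [hval i (j+1) hj, hval i j (by omega)]
    exact hF.2.2.1 i j (le_trans hj (hb i))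
  · -- type A for colLen
    intro ℓ r i hlr hbrl hi
    rw [hval ℓ (i+1) (le_trans hi hbrl), hval r (i+1) hi, hval ℓ i (by omega)]
    rcases le_or_gt (α r) (α ℓ) with hα | hα
    · exact hF.2.2.2.1 ℓ r i hlr hα (le_trans hi (hb r))
    · have hch := chainB hF hlr hα hbrl (i+1) hi
      omega
  · -- type B for colLen
    intro ℓ r i hlr hblr hi hi1
    rw [hval r (i+1) hi1, hval ℓ i hi, hval r i (by omega)]
    rcases le_or_gt (α r) (α ℓ) with hα | hα
    · have hch := chainA hF hlr hα hblr i hi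
      omega
    · exact hF.2.2.2.2 ℓ r i hlr hα (le_trans hi (hb ℓ)) (le_trans hi1 (hb r))
  · intro i j hj
    have : ¬ (j ≤ colLen α F i) := by omega
    exact if_neg this

end Aux

namespace Aux

variable {n : ℕ} {α β : Fin n → ℕ} {σ : Equiv.Perm (Fin n)} {G : Fin n → ℕ → ℕ}

lemma extF_of_le {i : Fin n} {j : ℕ} (h : j ≤ β i) : extF α β G i j = G i j := if_pos h

lemma extF_of_mid {i : Fin n} {j : ℕ} (h1 : β i < j) (h2 : j ≤ α i) :
    extF α β G i j = 1 := by
  unfold extF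
  rw [if_neg (by omega), if_pos h2]

lemma extF_of_gt {i : Fin n} {j : ℕ} (hba : β i ≤ α i) (h : α i < j) :
    extF α β G i j = 0 := by
  unfold extF
  rw [if_neg (by omega), if_neg (by omega)]

/-- Claim 3: extension of a no-1s SSAF of shape β by 1s is an SSAF of shape α. -/
lemma ext_mem (hext : SigmaExtendable n σ β α) (hG : G ∈ SSAFSet n β σ)
    (h2 : ∀ i j, 1 ≤ j → j ≤ β i → 2 ≤ G i j) :
    extF α β G ∈ SSAFSet n α σ := by
  obtain ⟨hG, hgz⟩ := hG
  have hba : ∀ i, β i ≤ α i := hext.1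
  have hgpos : ∀ (i : Fin n) j, j ≤ β i → 1 ≤ G i j := fun i j h => hG.1 i j h
  refine ⟨⟨?_, ?_, ?_, ?_, ?_⟩, ?_⟩
  · -- positivity
    intro i j hj
    rcases le_or_gt j (β i) with h | h
    · rw [extF_of_le h]; exact hgpos i j h
    · rw [extF_of_mid h hj]
  · -- basement
    intro i
    rw [extF_of_le (Nat.zero_le _)]
    exact hG.2.1 i
  · -- decreasing
    intro i j hj
    rcases le_or_gt (j + 1) (β i) with h | h
    · rw [extF_of_le h, extF_of_le (by omega)]
      exact hG.2.2.1 i j h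
    · rw [extF_of_mid h hj]
      rcases le_or_gt j (β i) with h' | h'
      · rw [extF_of_le h']; exact hgpos i j h'
      · rw [extF_of_mid h' (by omega)]
  · -- type A
    intro ℓ r i hlr hα hi
    rintro ⟨hab1, hab2⟩
    have hi1l : i + 1 ≤ α ℓ := le_trans hi hα
    rcases le_or_gt (i + 1) (β r) with hr1 | hr2
    · -- F r (i+1) = G r (i+1) ≥ 2
      rw [extF_of_le hr1] at hab1 hab2
      have hgr2 : 2 ≤ G r (i + 1) := h2 r (i + 1) (by omega) hr1
      have hil : i ≤ β ℓ := by
        by_contra hc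
        push_neg at hc
        rw [extF_of_mid hc (by omega)] at hab2
        omega
      rw [extF_of_le hil] at hab2
      rcases le_or_gt (β r) (β ℓ) with hbrl | hblr
      · rw [extF_of_le (le_trans hr1 hbrl)] at hab1
        exact hG.2.2.2.1 ℓ r i hlr hbrl hr1 ⟨hab1, hab2⟩
      · obtain ⟨hq, hσ⟩ := ((hext.2 ℓ r hlr).2.2.1) hα hblr
        have hbase : G ℓ 0 < G r 0 := by
          rw [hG.2.1 ℓ, hG.2.1 r]; omega
        have := chainC hG hlr hblr hbase i hil
        omega
    · -- F r (i+1) = 1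
      have her : extF α β G r (i + 1) = 1 := extF_of_mid hr2 hi
      rcases le_or_gt (β r) (β ℓ) with hbrl | hblr
      · have hαβ : α r ≤ β ℓ := ((hext.2 ℓ r hlr).1) hα hbrl
        rw [extF_of_le (le_trans hi hαβ), her] at hab1
        have := h2 ℓ (i + 1) (by omega) (le_trans hi hαβ)
        omega
      · obtain ⟨hq, hσ⟩ := ((hext.2 ℓ r hlr).2.2.1) hα hblr
        omega
  · -- type B
    intro ℓ r i hlr hα hil hi1
    rintro ⟨hb1, hb2⟩
    rcases le_or_gt i (β ℓ) with hl | hl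
    · rw [extF_of_le hl] at hb1 hb2
      rcases le_or_gt i (β r) with hr | hr
      · rw [extF_of_le hr] at hb2
        rcases le_or_gt (β r) (β ℓ) with hbrl | hblr
        · obtain ⟨hp, hσ⟩ := ((hext.2 ℓ r hlr).2.2.2) hα hbrl
          have hbase : G r 0 < G ℓ 0 := by
            rw [hG.2.1 ℓ, hG.2.1 r]; omega
          have := chainD hG hlr hbrl hbase i hr
          omega
        · rcases le_or_gt (i + 1) (β r) with hir | hir
          · rw [extF_of_le hir] at hb1
            exact hG.2.2.2.2 ℓ r i hlr hblr hl hir ⟨hb1, hb2⟩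
          · omega
      · rw [extF_of_mid hr (by omega)] at hb2
        have : 2 ≤ G ℓ i := h2 ℓ i (by omega) hl
        omega
    · rw [extF_of_mid hl hil] at hb1 hb2
      rcases le_or_gt (i + 1) (β r) with hir | hir
      · rw [extF_of_le hir] at hb1
        have := h2 r (i + 1) (by omega) hir
        omega
      · rcases le_or_gt (β r) (β ℓ) with hbrl | hblr
        · obtain ⟨hp, hσ⟩ := ((hext.2 ℓ r hlr).2.2.2) hα hbrl
          omega
        · have hc2 := ((hext.2 ℓ r hlr).2.1) hα hblr
          omega
  · -- zero outside
    intro i j hj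
    exact extF_of_gt (hba i) hj

end Aux

namespace Aux

variable {n : ℕ} {α β : Fin n → ℕ} {σ : Equiv.Perm (Fin n)} {F G : Fin n → ℕ → ℕ}

lemma colLen_ext (hba : ∀ i, β i ≤ α i) (hG : G ∈ SSAFSet n β σ)
    (h2 : ∀ i j, 1 ≤ j → j ≤ β i → 2 ≤ G i j) :
    colLen α (extF α β G) = β := by
  funext i
  apply Nat.findGreatest_eq_iff.mpr
  refine ⟨hba i, ?_, ?_⟩
  · intro hne
    rw [extF_of_le (le_refl _)]
    exact h2 i (β i) (by omega) le_rfl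
  · intro k hk hk'
    rw [extF_of_mid hk hk']
    omega

lemma ext_trunc (hF : F ∈ SSAFSet n α σ) :
    extF α (colLen α F) (truncF (colLen α F) F) = F := by
  funext i j
  rcases le_or_gt j (colLen α F i) with h | h
  · rw [extF_of_le h, truncF_of_le h]
  · rcases le_or_gt j (α i) with h' | h'
    · rw [extF_of_mid h h', eq_one_of_colLen_lt hF.1 h h']
    · rw [extF_of_gt (colLen_le α F i) h', hF.2 i j h']

lemma trunc_ext (hG : G ∈ SSAFSet n β σ) :
    truncF β (extF α β G) = G := by
  funext i j
  rcases le_or_gt j (β i) with h | h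
  · rw [truncF_of_le h, extF_of_le h]
  · unfold truncF
    rw [if_neg (by omega), hG.2 i j h]

end Aux

namespace Aux

variable {n : ℕ} {α β : Fin n → ℕ} {σ : Equiv.Perm (Fin n)} {F G : Fin n → ℕ → ℕ}

lemma val_le (hF : F ∈ SSAFSet n α σ) (i : Fin n) (j : ℕ) : F i j ≤ n + 1 := by
  rcases le_or_gt j (α i) with hj | hj
  · have h1 : F i j ≤ F i 0 := antitone_col hF.1 i (Nat.zero_le _) hj
    have h2 : F i 0 = (σ i : ℕ) + 1 := hF.1.2.1 i
    have h3 : (σ i : ℕ) < n := (σ i).2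
    omega
  · rw [hF.2 i j hj]; omega

lemma ssaf_finite (n : ℕ) (α : Fin n → ℕ) (σ : Equiv.Perm (Fin n)) :
    (SSAFSet n α σ).Finite := by
  classical
  set M := ∑ i, α i with hM
  have hαM : ∀ i : Fin n, α i ≤ M :=
    fun i => Finset.single_le_sum (fun _ _ => Nat.zero_le _) (Finset.mem_univ i)
  apply Set.Finite.of_finite_image
    (f := fun (F : Fin n → ℕ → ℕ) (i : Fin n) (j : Fin (M + 1)) =>
      (⟨min (F i (j : ℕ)) (n + 1), by omega⟩ : Fin (n + 2)))
  · exact Set.toFinite _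
  · intro F hF F' hF' h
    funext i j
    rcases le_or_gt j (α i) with hj | hj
    · have hj' : j < M + 1 := by have := hαM i; omega
      have hv : min (F i j) (n + 1) = min (F' i j) (n + 1) :=
        congrArg Fin.val (congrFun (congrFun h i) ⟨j, hj'⟩)
      have b1 := val_le hF i j
      have b2 := val_le hF' i j
      rwa [Nat.min_eq_left b1, Nat.min_eq_left b2] at hv
    · rw [hF.2 i j hj, hF'.2 i j hj]

lemma extendable_finite (n : ℕ) (α : Fin n → ℕ) (σ : Equiv.Perm (Fin n)) :
    {β : Fin n → ℕ | SigmaExtendable n σ β α}.Finite := by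
  classical
  set M := ∑ i, α i with hM
  have hαM : ∀ i : Fin n, α i ≤ M :=
    fun i => Finset.single_le_sum (fun _ _ => Nat.zero_le _) (Finset.mem_univ i)
  apply Set.Finite.of_finite_image
    (f := fun (β : Fin n → ℕ) (i : Fin n) => (⟨min (β i) M, by omega⟩ : Fin (M + 1)))
  · exact Set.toFinite _
  · intro β hβ β' hβ' h
    funext i
    have hv : min (β i) M = min (β' i) M := congrArg Fin.val (congrFun h i)
    have b1 : β i ≤ M := le_trans (hβ.1 i) (hαM i)
    have b2 : β' i ≤ M := le_trans (hβ'.1 i) (hαM i)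
    rwa [Nat.min_eq_left b1, Nat.min_eq_left b2] at hv

end Aux

namespace Aux

variable {n : ℕ} {α β : Fin n → ℕ} {σ : Equiv.Perm (Fin n)} {F G : Fin n → ℕ → ℕ}

lemma weight_split (x : ℕ → ℝ) (hF : F ∈ SSAFSet n α σ) :
    ∏ i : Fin n, ∏ j ∈ Finset.Icc 1 (α i), x (F i j) =
      x 1 ^ (∑ i, α i - ∑ i, colLen α F i) *
        ∏ i : Fin n, ∏ j ∈ Finset.Icc 1 (colLen α F i), x (F i j) := by
  have hb : ∀ i, colLen α F i ≤ α i := colLen_le α F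
  have hcol : ∀ i : Fin n, ∏ j ∈ Finset.Icc 1 (α i), x (F i j) =
      x 1 ^ (α i - colLen α F i) * ∏ j ∈ Finset.Icc 1 (colLen α F i), x (F i j) := by
    intro i
    have h1 : Finset.Icc 1 (α i) = Finset.Ioc 0 (α i) := by
      rw [← Finset.Icc_add_one_left_eq_Ioc]; rfl
    have h2 : Finset.Icc 1 (colLen α F i) = Finset.Ioc 0 (colLen α F i) := by
      rw [← Finset.Icc_add_one_left_eq_Ioc]; rfl
    rw [h1, h2, ← Finset.prod_Ioc_consecutive (fun j => x (F i j)) (Nat.zero_le _) (hb i)]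
    have h3 : ∏ j ∈ Finset.Ioc (colLen α F i) (α i), x (F i j) =
        x 1 ^ (α i - colLen α F i) := by
      rw [Finset.prod_congr rfl (fun j hj => by
        rw [eq_one_of_colLen_lt hF.1 (Finset.mem_Ioc.mp hj).1 (Finset.mem_Ioc.mp hj).2]),
        Finset.prod_const, Nat.card_Ioc]
    rw [h3, mul_comm]
  rw [Finset.prod_congr rfl (fun i _ => hcol i), Finset.prod_mul_distrib,
    Finset.prod_pow_eq_pow_sum]
  congr 2
  have : ∑ i, (α i - colLen α F i) + ∑ i, colLen α F i = ∑ i, α i := by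
    rw [← Finset.sum_add_distrib]
    exact Finset.sum_congr rfl (fun i _ => by have := hb i; omega)
  omega

end Aux


/-- The permuted-basement Demazure atom `𝒜_α^σ`, as a sum of monomial weights
over SSAFs of shape `α` with basement `σ`; `x j` is the variable `x_j`. -/
noncomputable def atomSum (n : ℕ) (α : Fin n → ℕ) (σ : Equiv.Perm (Fin n)) (x : ℕ → ℝ) : ℝ :=
  ∑ᶠ F ∈ SSAFSet n α σ, ∏ i : Fin n, ∏ j ∈ Finset.Icc 1 (α i), x (F i j)

theorem stmt10 (n : ℕ) (α : Fin n → ℕ) (σ : Equiv.Perm (Fin n)) (x : ℕ → ℝ) :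
    atomSum n α σ x =
      ∑ᶠ β ∈ {β : Fin n → ℕ | SigmaExtendable n σ β α},
        (x 1) ^ ((∑ i, α i) - ∑ i, β i) *
          atomSum n β σ (Function.update x 1 0) := by
  classical
  have hSA := Aux.ssaf_finite n α σ
  have hE := Aux.extendable_finite n α σ
  rw [atomSum, finsum_mem_eq_finite_toFinset_sum _ hSA,
      finsum_mem_eq_finite_toFinset_sum _ hE]
  -- inner atomSums as finset sums over no-ones SSAFs, in variables x
  have hinner : ∀ β : Fin n → ℕ,
      atomSum n β σ (Function.update x 1 0) =
        ∑ G ∈ (Aux.ssaf_finite n β σ).toFinset.filter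
            (fun G => ∀ (i : Fin n) (j : ℕ), 1 ≤ j → j ≤ β i → 2 ≤ G i j),
          ∏ i : Fin n, ∏ j ∈ Finset.Icc 1 (β i), x (G i j) := by
    intro β
    set P : (Fin n → ℕ → ℕ) → Prop :=
      fun G => ∀ (i : Fin n) (j : ℕ), 1 ≤ j → j ≤ β i → 2 ≤ G i j with hP
    rw [atomSum, finsum_mem_eq_finite_toFinset_sum _ (Aux.ssaf_finite n β σ)]
    have hzero : ∀ G ∈ (Aux.ssaf_finite n β σ).toFinset,
        G ∉ (Aux.ssaf_finite n β σ).toFinset.filter P →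
        (∏ i : Fin n, ∏ j ∈ Finset.Icc 1 (β i), Function.update x 1 0 (G i j)) = 0 := by
      intro G hG hG'
      have hGm := (Set.Finite.mem_toFinset _).mp hG
      have hnP : ¬ P G := fun h => hG' (Finset.mem_filter.mpr ⟨hG, h⟩)
      have hex : ∃ (i : Fin n) (j : ℕ), 1 ≤ j ∧ j ≤ β i ∧ G i j < 2 := by
        by_contra hc
        push_neg at hc
        exact hnP (fun i j h1 h2 => hc i j h1 h2)
      obtain ⟨i, j, hj1, hj2, hlt⟩ := hex
      have hone : G i j = 1 := by
        have := hGm.1.1 i j hj2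
        omega
      apply Finset.prod_eq_zero (Finset.mem_univ i)
      apply Finset.prod_eq_zero (Finset.mem_Icc.mpr ⟨hj1, hj2⟩)
      rw [hone, Function.update_self]
    rw [← Finset.sum_subset (Finset.filter_subset P (Aux.ssaf_finite n β σ).toFinset) hzero]
    refine Finset.sum_congr rfl (fun G hG => ?_)
    obtain ⟨hGm, hG2⟩ := Finset.mem_filter.mp hG
    refine Finset.prod_congr rfl (fun i _ => Finset.prod_congr rfl (fun j hj => ?_))
    have hj' := Finset.mem_Icc.mp hj
    have : 2 ≤ G i j := hG2 i j hj'.1 hj'.2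
    rw [Function.update_of_ne (by omega) _ x]
  -- grouping by colLen and bijection
  have hmaps : ∀ F ∈ hSA.toFinset, Aux.colLen α F ∈ hE.toFinset := by
    intro F hF
    rw [Set.Finite.mem_toFinset] at hF ⊢
    exact Aux.extendable_colLen hF.1
  rw [← Finset.sum_fiberwise_of_maps_to hmaps
    (fun F => ∏ i : Fin n, ∏ j ∈ Finset.Icc 1 (α i), x (F i j))]
  refine Finset.sum_congr rfl (fun β hβ => ?_)
  rw [hinner β, Finset.mul_sum]
  have hβE : SigmaExtendable n σ β α := by
    rw [Set.Finite.mem_toFinset] at hβ; exact hβ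
  refine Finset.sum_nbij' (fun F => Aux.truncF β F) (fun G => Aux.extF α β G)
    ?_ ?_ ?_ ?_ ?_
  · intro F hF
    obtain ⟨hFm, hcol⟩ := Finset.mem_filter.mp hF
    rw [Set.Finite.mem_toFinset] at hFm
    have htr := Aux.trunc_mem hFm
    rw [hcol] at htr
    rw [Finset.mem_filter, Set.Finite.mem_toFinset]
    exact ⟨htr.1, htr.2⟩
  · intro G hG
    obtain ⟨hGm, hG2⟩ := Finset.mem_filter.mp hG
    rw [Set.Finite.mem_toFinset] at hGm
    rw [Finset.mem_filter, Set.Finite.mem_toFinset]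
    exact ⟨Aux.ext_mem hβE hGm hG2, by rw [Aux.colLen_ext hβE.1 hGm hG2]⟩
  · intro F hF
    obtain ⟨hFm, hcol⟩ := Finset.mem_filter.mp hF
    rw [Set.Finite.mem_toFinset] at hFm
    show Aux.extF α β (Aux.truncF β F) = F
    rw [← hcol]
    exact Aux.ext_trunc hFm
  · intro G hG
    obtain ⟨hGm, _⟩ := Finset.mem_filter.mp hG
    rw [Set.Finite.mem_toFinset] at hGm
    exact Aux.trunc_ext hGm
  · intro F hF
    obtain ⟨hFm, hcol⟩ := Finset.mem_filter.mp hF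
    rw [Set.Finite.mem_toFinset] at hFm
    show _ = x 1 ^ (∑ i, α i - ∑ i, β i) *
      ∏ i : Fin n, ∏ j ∈ Finset.Icc 1 (β i), x (Aux.truncF β F i j)
    rw [Aux.weight_split x hFm, hcol]
    congr 1
    exact Finset.prod_congr rfl (fun i _ => Finset.prod_congr rfl (fun j hj =>
      by rw [Aux.truncF_of_le ((Finset.mem_Icc.mp hj).2)]))
end

section
/- If β is σ-extendable to α and β_s = 0 where s = σ^{-1}(1), then 𝒜_β^σ(0, x_2, ..., x_n) = 𝒜_{β_{(1)}}^{σ_1}(x_2, ..., x_n), where β_{(1)} = (β_1,...,β_{s−1},β_{s+1},...,β_n) and σ_1 is the permutation of [n−1] obtained from σ by deleting the value 1 and subtracting 1 from the remaining values. -/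
/-- The forward map: delete column `s` and subtract one from all entries. -/
def ssafPhi (n : ℕ) (s : Fin (n + 1)) (F : Fin (n + 1) → ℕ → ℕ) : Fin n → ℕ → ℕ :=
  fun i j => F (s.succAbove i) j - 1

/-- The inverse map. -/
def ssafPsi (n : ℕ) (s : Fin (n + 1)) (β : Fin (n + 1) → ℕ) (G : Fin n → ℕ → ℕ) :
    Fin (n + 1) → ℕ → ℕ :=
  fun k j => (finSuccEquiv' s k).elim (if j = 0 then 1 else 0)
    (fun i => if β (s.succAbove i) < j then 0 else G i j + 1)

lemma ssafPsi_self (n : ℕ) (s : Fin (n + 1)) (β : Fin (n + 1) → ℕ) (G : Fin n → ℕ → ℕ)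
    (j : ℕ) : ssafPsi n s β G s j = if j = 0 then 1 else 0 := by
  simp [ssafPsi, finSuccEquiv'_at]

lemma ssafPsi_succAbove (n : ℕ) (s : Fin (n + 1)) (β : Fin (n + 1) → ℕ) (G : Fin n → ℕ → ℕ)
    (i : Fin n) (j : ℕ) :
    ssafPsi n s β G (s.succAbove i) j =
      if β (s.succAbove i) < j then 0 else G i j + 1 := by
  simp [ssafPsi]

/-- Entries of an SSAF with no non-basement ones are at least 2 off column `s`. -/
lemma ssaf_two_le {n : ℕ} {σ : Equiv.Perm (Fin (n + 1))} {β : Fin (n + 1) → ℕ}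
    {σ1 : Equiv.Perm (Fin n)} {s : Fin (n + 1)}
    (hσ1 : ∀ i : Fin n, (σ1 i : ℕ) + 1 = (σ (s.succAbove i) : ℕ))
    {F : Fin (n + 1) → ℕ → ℕ} (hF : F ∈ SSAFSet (n + 1) β σ)
    (hno : ∀ i j, 1 ≤ j → j ≤ β i → F i j ≠ 1)
    (i : Fin n) (j : ℕ) (hj : j ≤ β (s.succAbove i)) : 2 ≤ F (s.succAbove i) j := by
  obtain ⟨⟨h1, h2, -, -, -⟩, -⟩ := hF
  rcases Nat.eq_zero_or_pos j with rfl | hj1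
  · have := h2 (s.succAbove i)
    have := hσ1 i
    omega
  · have := h1 (s.succAbove i) j hj
    have := hno (s.succAbove i) j hj1 hj
    omega

lemma ssafPhi_mem {n : ℕ} {σ : Equiv.Perm (Fin (n + 1))} {β : Fin (n + 1) → ℕ}
    {σ1 : Equiv.Perm (Fin n)} {s : Fin (n + 1)}
    (hσ1 : ∀ i : Fin n, (σ1 i : ℕ) + 1 = (σ (s.succAbove i) : ℕ))
    {F : Fin (n + 1) → ℕ → ℕ} (hF : F ∈ SSAFSet (n + 1) β σ)
    (hno : ∀ i j, 1 ≤ j → j ≤ β i → F i j ≠ 1) :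
    ssafPhi n s F ∈ SSAFSet n (fun i => β (s.succAbove i)) σ1 := by
  have h2le := ssaf_two_le hσ1 hF hno
  obtain ⟨⟨h1, h2, h3, h4, h5⟩, hz⟩ := hF
  refine ⟨⟨?_, ?_, ?_, ?_, ?_⟩, ?_⟩
  · intro i j hj
    replace hj : j ≤ β (s.succAbove i) := hj
    have := h2le i j hj
    simp only [ssafPhi]
    omega
  · intro i
    have := h2 (s.succAbove i)
    have := hσ1 i
    simp only [ssafPhi]
    omega
  · intro i j hj
    replace hj : j + 1 ≤ β (s.succAbove i) := hj
    exact Nat.sub_le_sub_right (h3 (s.succAbove i) j hj) 1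
  · intro ℓ r i hlr hshape hi hcon
    replace hshape : β (s.succAbove r) ≤ β (s.succAbove ℓ) := hshape
    replace hi : i + 1 ≤ β (s.succAbove r) := hi
    simp only [ssafPhi] at hcon
    have hLR : s.succAbove ℓ < s.succAbove r := (Fin.strictMono_succAbove s) hlr
    have a1 := h2le ℓ (i + 1) (le_trans hi hshape)
    have a2 := h2le r (i + 1) hi
    have a3 := h2le ℓ i (by have := le_trans hi hshape; omega)
    exact h4 (s.succAbove ℓ) (s.succAbove r) i hLR hshape hi ⟨by omega, by omega⟩
  · intro ℓ r i hlr hshape hi1 hi2 hcon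
    replace hshape : β (s.succAbove ℓ) < β (s.succAbove r) := hshape
    replace hi1 : i ≤ β (s.succAbove ℓ) := hi1
    replace hi2 : i + 1 ≤ β (s.succAbove r) := hi2
    simp only [ssafPhi] at hcon
    have hLR : s.succAbove ℓ < s.succAbove r := (Fin.strictMono_succAbove s) hlr
    have a1 := h2le r (i + 1) hi2
    have a2 := h2le ℓ i hi1
    have a3 := h2le r i (by omega)
    exact h5 (s.succAbove ℓ) (s.succAbove r) i hLR hshape hi1 hi2 ⟨by omega, by omega⟩
  · intro i j hj
    replace hj : β (s.succAbove i) < j := hj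
    simp only [ssafPhi, hz (s.succAbove i) j hj]

lemma ssafPsi_mem {n : ℕ} {σ : Equiv.Perm (Fin (n + 1))} {β : Fin (n + 1) → ℕ}
    {σ1 : Equiv.Perm (Fin n)} {s : Fin (n + 1)}
    (hσs : (σ s : ℕ) = 0) (hβs : β s = 0)
    (hσ1 : ∀ i : Fin n, (σ1 i : ℕ) + 1 = (σ (s.succAbove i) : ℕ))
    {G : Fin n → ℕ → ℕ} (hG : G ∈ SSAFSet n (fun i => β (s.succAbove i)) σ1) :
    ssafPsi n s β G ∈ SSAFSet (n + 1) β σ ∧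
      ∀ i j, 1 ≤ j → j ≤ β i → ssafPsi n s β G i j ≠ 1 := by
  obtain ⟨⟨g1, g2, g3, g4, g5⟩, gz⟩ := hG
  replace g1 : ∀ i j, j ≤ β (s.succAbove i) → 1 ≤ G i j := g1
  replace g2 : ∀ i, G i 0 = (σ1 i : ℕ) + 1 := g2
  replace g3 : ∀ i j, j + 1 ≤ β (s.succAbove i) → G i (j + 1) ≤ G i j := g3
  replace gz : ∀ i j, β (s.succAbove i) < j → G i j = 0 := gz
  -- decompose an index different from s
  have hdec : ∀ k : Fin (n + 1), k ≠ s → ∃ i, s.succAbove i = k := fun k hk =>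
    Fin.exists_succAbove_eq hk
  refine ⟨⟨⟨?_, ?_, ?_, ?_, ?_⟩, ?_⟩, ?_⟩
  · -- positivity
    intro k j hj
    rcases eq_or_ne k s with rfl | hk
    · have : j = 0 := by omega
      simp [this, ssafPsi_self]
    · obtain ⟨i, rfl⟩ := hdec k hk
      rw [ssafPsi_succAbove, if_neg (by omega)]
      omega
  · -- basement
    intro k
    rcases eq_or_ne k s with rfl | hk
    · simp [ssafPsi_self, hσs]
    · obtain ⟨i, rfl⟩ := hdec k hk
      rw [ssafPsi_succAbove, if_neg (by omega)]
      rw [g2 i]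
      have := hσ1 i
      omega
  · -- no descents
    intro k j hj
    rcases eq_or_ne k s with rfl | hk
    · omega
    · obtain ⟨i, rfl⟩ := hdec k hk
      rw [ssafPsi_succAbove, ssafPsi_succAbove, if_neg (by omega), if_neg (by omega)]
      have := g3 i j hj
      omega
  · -- type A
    intro ℓ r i hlr hshape hi hcon
    have hrs : r ≠ s := fun h => by rw [h, hβs] at hi; omega
    have hls : ℓ ≠ s := fun h => by rw [h, hβs] at hshape; omega
    obtain ⟨ℓ', rfl⟩ := hdec ℓ hls
    obtain ⟨r', rfl⟩ := hdec r hrs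
    have hlr' : ℓ' < r' := (Fin.strictMono_succAbove s).lt_iff_lt.mp hlr
    rw [ssafPsi_succAbove, ssafPsi_succAbove, ssafPsi_succAbove,
      if_neg (by omega), if_neg (by omega), if_neg (by omega)] at hcon
    exact g4 ℓ' r' i hlr' hshape hi ⟨by omega, by omega⟩
  · -- type B
    intro ℓ r i hlr hshape hi1 hi2 hcon
    have hrs : r ≠ s := fun h => by rw [h, hβs] at hi2; omega
    obtain ⟨r', rfl⟩ := hdec r hrs
    rcases eq_or_ne ℓ s with rfl | hls
    · have hi0 : i = 0 := by omega
      subst hi0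
      rw [ssafPsi_succAbove, ssafPsi_self, if_neg (by omega)] at hcon
      have := g1 r' 1 hi2
      simp at hcon
      omega
    · obtain ⟨ℓ', rfl⟩ := hdec ℓ hls
      have hlr' : ℓ' < r' := (Fin.strictMono_succAbove s).lt_iff_lt.mp hlr
      rw [ssafPsi_succAbove, ssafPsi_succAbove, ssafPsi_succAbove,
        if_neg (by omega), if_neg (by omega), if_neg (by omega)] at hcon
      exact g5 ℓ' r' i hlr' hshape hi1 hi2 ⟨by omega, by omega⟩
  · -- zero outside
    intro k j hj
    rcases eq_or_ne k s with rfl | hk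
    · rw [ssafPsi_self, if_neg (by omega)]
    · obtain ⟨i, rfl⟩ := hdec k hk
      rw [ssafPsi_succAbove, if_pos hj]
  · -- no non-basement ones
    intro k j hj1 hj2
    have hk : k ≠ s := fun h => by rw [h, hβs] at hj2; omega
    obtain ⟨i, rfl⟩ := hdec k hk
    rw [ssafPsi_succAbove, if_neg (by omega)]
    have := g1 i j hj2
    omega

lemma ssafPsi_phi {n : ℕ} {σ : Equiv.Perm (Fin (n + 1))} {β : Fin (n + 1) → ℕ}
    {s : Fin (n + 1)} (hσs : (σ s : ℕ) = 0) (hβs : β s = 0)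
    {F : Fin (n + 1) → ℕ → ℕ} (hF : F ∈ SSAFSet (n + 1) β σ) :
    ssafPsi n s β (ssafPhi n s F) = F := by
  obtain ⟨⟨h1, h2, -, -, -⟩, hz⟩ := hF
  funext k j
  rcases eq_or_ne k s with rfl | hk
  · rw [ssafPsi_self]
    rcases Nat.eq_zero_or_pos j with rfl | hj
    · rw [if_pos rfl, h2 _, hσs]
    · rw [if_neg (by omega), hz _ j (by omega)]
  · obtain ⟨i, rfl⟩ := Fin.exists_succAbove_eq hk
    rw [ssafPsi_succAbove]
    rcases lt_or_ge (β (s.succAbove i)) j with hj | hj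
    · rw [if_pos hj, hz _ j hj]
    · rw [if_neg (by omega)]
      have := h1 (s.succAbove i) j hj
      simp only [ssafPhi]
      omega

lemma ssafPhi_psi {n : ℕ} {σ1 : Equiv.Perm (Fin n)} {β : Fin (n + 1) → ℕ}
    {s : Fin (n + 1)}
    {G : Fin n → ℕ → ℕ} (hG : G ∈ SSAFSet n (fun i => β (s.succAbove i)) σ1) :
    ssafPhi n s (ssafPsi n s β G) = G := by
  obtain ⟨-, gz⟩ := hG
  replace gz : ∀ i j, β (s.succAbove i) < j → G i j = 0 := gz
  funext i j
  simp only [ssafPhi, ssafPsi_succAbove]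
  rcases lt_or_ge (β (s.succAbove i)) j with hj | hj
  · rw [if_pos hj, gz i j hj]
  · rw [if_neg (by omega)]
    omega

theorem stmt12 (n : ℕ) (σ : Equiv.Perm (Fin (n + 1))) (α β : Fin (n + 1) → ℕ)
    (hext : SigmaExtendable (n + 1) σ β α) (hs : β (σ⁻¹ 0) = 0)
    (σ1 : Equiv.Perm (Fin n))
    (hσ1 : ∀ i : Fin n, (σ1 i : ℕ) + 1 = ((σ ((σ⁻¹ 0).succAbove i)) : ℕ))
    (x : ℕ → ℝ) :
    atomSum (n + 1) β σ (Function.update x 1 0) =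
      atomSum n (fun i => β ((σ⁻¹ 0).succAbove i)) σ1 (fun j => x (j + 1)) := by
  classical
  have hσs : (σ (σ⁻¹ 0) : ℕ) = 0 := by simp
  set s : Fin (n + 1) := σ⁻¹ 0 with hsdef
  set u : ℕ → ℝ := Function.update x 1 0 with hu
  set S0 : Set (Fin (n + 1) → ℕ → ℕ) :=
    {F | F ∈ SSAFSet (n + 1) β σ ∧ ∀ i j, 1 ≤ j → j ≤ β i → F i j ≠ 1} with hS0
  simp only [atomSum]
  have step1 : ∑ᶠ F ∈ SSAFSet (n + 1) β σ,
        ∏ i : Fin (n + 1), ∏ j ∈ Finset.Icc 1 (β i), u (F i j)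
      = ∑ᶠ F ∈ S0, ∏ i : Fin (n + 1), ∏ j ∈ Finset.Icc 1 (β i), u (F i j) := by
    apply finsum_mem_inter_support_eq
    ext F
    simp only [Set.mem_inter_iff, Function.mem_support, hS0, Set.mem_setOf_eq]
    constructor
    · rintro ⟨hF, hw⟩
      refine ⟨⟨hF, fun i j hj1 hj2 hone => hw ?_⟩, hw⟩
      apply Finset.prod_eq_zero (Finset.mem_univ i)
      apply Finset.prod_eq_zero (Finset.mem_Icc.mpr ⟨hj1, hj2⟩)
      rw [hone, hu]
      exact Function.update_self 1 0 x
    · rintro ⟨⟨hF, -⟩, hw⟩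
      exact ⟨hF, hw⟩
  rw [step1]
  apply finsum_mem_eq_of_bijOn (ssafPhi n s)
  · refine Set.InvOn.bijOn (f' := ssafPsi n s β) ⟨?_, ?_⟩ ?_ ?_
    · intro F hF
      exact ssafPsi_phi hσs hs hF.1
    · intro G hG
      exact ssafPhi_psi hG
    · intro F hF
      exact ssafPhi_mem hσ1 hF.1 hF.2
    · intro G hG
      exact ssafPsi_mem hσs hs hσ1 hG
  · intro F hF
    obtain ⟨hF, hno⟩ := hF
    obtain ⟨⟨h1, -, -, -, -⟩, -⟩ := hF
    rw [Fin.prod_univ_succAbove (fun k => ∏ j ∈ Finset.Icc 1 (β k), u (F k j)) s]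
    rw [hs, Finset.Icc_eq_empty (by omega), Finset.prod_empty, one_mul]
    refine Finset.prod_congr rfl fun i _ => Finset.prod_congr rfl fun j hj => ?_
    rw [Finset.mem_Icc] at hj
    have h1' := h1 (s.succAbove i) j hj.2
    rw [hu, Function.update_of_ne (hno _ j hj.1 hj.2)]
    congr 1
    simp only [ssafPhi]
    omega
end

section
/- For a weak composition α of length n and σ ∈ S_n, the atom satisfies the branching formula 𝒜_α^σ(x_1,...,x_n) = Σ_{β_{(1)} ⋖_σ α} x_1^{|α|−|β_{(1)}|} · 𝒜_{β_{(1)}}^{σ_1}(x_2,...,x_n), where the sum is over weak compositions β_{(1)} of length n−1 covered by α in the poset ≤_σ. -/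
section Ladders
variable {n : ℕ} {α : Fin n → ℕ} {F : Fin n → ℕ → ℕ}

lemma col_anti (hdec : ∀ i j, j + 1 ≤ α i → F i (j + 1) ≤ F i j)
    (i : Fin n) : ∀ j j' : ℕ, j ≤ j' → j' ≤ α i → F i j' ≤ F i j := by
  intro j j' hjj
  induction j' with
  | zero => intro _; simp [Nat.le_zero.mp hjj]
  | succ m ih =>
    intro h'
    rcases Nat.eq_or_lt_of_le hjj with h | h
    · exact h ▸ le_rfl
    · exact le_trans (hdec i m h') (ih (Nat.lt_succ_iff.mp h) (le_trans (Nat.le_succ m) h'))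

/-- Downward type-A ladder: if column ℓ is weakly below column r at some level,
then at the basement strictly below. -/
lemma ladderA (hdec : ∀ i j, j + 1 ≤ α i → F i (j + 1) ≤ F i j)
    (hA : ∀ ℓ r : Fin n, ∀ i : ℕ, ℓ < r → α r ≤ α ℓ → i + 1 ≤ α r →
      ¬ (F ℓ (i + 1) ≤ F r (i + 1) ∧ F r (i + 1) ≤ F ℓ i))
    {ℓ r : Fin n} (hlr : ℓ < r) (hα : α r ≤ α ℓ) :
    ∀ i : ℕ, i + 1 ≤ α r → F ℓ (i + 1) ≤ F r (i + 1) → F ℓ 0 < F r 0 := by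
  intro i
  induction i with
  | zero =>
    intro h1 h2
    have h3 : F ℓ 0 < F r 1 := not_le.mp (fun hb => hA ℓ r 0 hlr hα h1 ⟨h2, hb⟩)
    exact h3.trans_le (col_anti hdec r 0 1 (Nat.zero_le 1) h1)
  | succ m ih =>
    intro h1 h2
    have h3 : F ℓ (m + 1) < F r (m + 2) :=
      not_le.mp (fun hb => hA ℓ r (m + 1) hlr hα h1 ⟨h2, hb⟩)
    have h4 : F r (m + 2) ≤ F r (m + 1) := hdec r (m + 1) h1
    exact ih (le_trans (Nat.le_succ _) h1) (le_trans h3.le h4)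

/-- Downward type-B ladder. -/
lemma ladderB (hdec : ∀ i j, j + 1 ≤ α i → F i (j + 1) ≤ F i j)
    (hB : ∀ ℓ r : Fin n, ∀ i : ℕ, ℓ < r → α ℓ < α r → i ≤ α ℓ → i + 1 ≤ α r →
      ¬ (F r (i + 1) ≤ F ℓ i ∧ F ℓ i ≤ F r i))
    {ℓ r : Fin n} (hlr : ℓ < r) (hα : α ℓ < α r) :
    ∀ i : ℕ, i ≤ α ℓ → i + 1 ≤ α r → F r (i + 1) ≤ F ℓ i → F r 0 < F ℓ 0 := by
  intro i
  induction i with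
  | zero =>
    intro h0 h1 h2
    exact not_le.mp (fun hb => hB ℓ r 0 hlr hα h0 h1 ⟨h2, hb⟩)
  | succ m ih =>
    intro h0 h1 h2
    have h3 : F r (m + 1) < F ℓ (m + 1) :=
      not_le.mp (fun hb => hB ℓ r (m + 1) hlr hα h0 h1 ⟨h2, hb⟩)
    have h4 : F ℓ (m + 1) ≤ F ℓ m := hdec ℓ m h0
    exact ih (le_trans (Nat.le_succ _) h0) (le_trans (Nat.le_succ _) h1)
      (le_trans h3.le h4)

/-- Upward type-B ladder. -/
lemma upB (hdec : ∀ i j, j + 1 ≤ α i → F i (j + 1) ≤ F i j)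
    (hB : ∀ ℓ r : Fin n, ∀ i : ℕ, ℓ < r → α ℓ < α r → i ≤ α ℓ → i + 1 ≤ α r →
      ¬ (F r (i + 1) ≤ F ℓ i ∧ F ℓ i ≤ F r i))
    {ℓ r : Fin n} (hlr : ℓ < r) (hα : α ℓ < α r) (t0 : ℕ) (ht0 : t0 ≤ α ℓ)
    (h0 : F ℓ t0 ≤ F r t0) : F ℓ (α ℓ) < F r (α ℓ + 1) := by
  have key : ∀ t, t0 ≤ t → t ≤ α ℓ → F ℓ t ≤ F r t := by
    intro t ht
    induction t, ht using Nat.le_induction with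
    | base => intro _; exact h0
    | succ m hm ih =>
      intro hma1
      have hm' : m ≤ α ℓ := le_trans (Nat.le_succ m) hma1
      have h1 := ih hm'
      have h2 : F ℓ m < F r (m + 1) :=
        not_le.mp (fun hb => hB ℓ r m hlr hα hm' (le_trans hma1 hα.le) ⟨hb, h1⟩)
      exact le_trans (hdec ℓ m hma1) h2.le
  have hfin := key (α ℓ) ht0 le_rfl
  exact not_le.mp (fun hb => hB ℓ r (α ℓ) hlr hα le_rfl hα ⟨hb, hfin⟩)

/-- Upward type-A ladder. -/
lemma upA (hdec : ∀ i j, j + 1 ≤ α i → F i (j + 1) ≤ F i j)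
    (hA : ∀ ℓ r : Fin n, ∀ i : ℕ, ℓ < r → α r ≤ α ℓ → i + 1 ≤ α r →
      ¬ (F ℓ (i + 1) ≤ F r (i + 1) ∧ F r (i + 1) ≤ F ℓ i))
    {ℓ r : Fin n} (hlr : ℓ < r) (hα : α r ≤ α ℓ) (t0 T : ℕ)
    (h0 : F r (t0 + 1) ≤ F ℓ t0) (htT : t0 < T) (hT : T ≤ α r) : F r T < F ℓ T := by
  have inv : ∀ t, t0 ≤ t → t + 1 ≤ α r → F r (t + 1) ≤ F ℓ t := by
    intro t ht
    induction t, ht using Nat.le_induction with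
    | base => intro _; exact h0
    | succ m hm ih =>
      intro h1
      have h2 := ih (le_trans (by omega) h1)
      have h3 : F r (m + 1) < F ℓ (m + 1) :=
        not_le.mp (fun hb => hA ℓ r m hlr hα (le_trans (by omega) h1) ⟨hb, h2⟩)
      exact le_trans (hdec r (m + 1) h1) h3.le
  obtain ⟨d, rfl⟩ : ∃ d, T = t0 + d + 1 := ⟨T - t0 - 1, by omega⟩
  have h2 := inv (t0 + d) (by omega) hT
  exact not_le.mp (fun hb => hA ℓ r (t0 + d) hlr hα hT ⟨hb, h2⟩)

end Ladders
/-- number of entries ≥ 2 in column `p.succAbove k`. -/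
def bMap (n : ℕ) (α : Fin (n + 1) → ℕ) (p : Fin (n + 1)) (F : Fin (n + 1) → ℕ → ℕ) :
    Fin n → ℕ :=
  fun k => Nat.findGreatest (fun j => 2 ≤ F (p.succAbove k) j) (α (p.succAbove k))

def betaOf (n : ℕ) (α : Fin (n + 1) → ℕ) (p : Fin (n + 1)) (F : Fin (n + 1) → ℕ → ℕ) :
    Fin (n + 1) → ℕ :=
  p.insertNth 0 (bMap n α p F)

def phiMap (n : ℕ) (α : Fin (n + 1) → ℕ) (p : Fin (n + 1)) (F : Fin (n + 1) → ℕ → ℕ) :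
    Fin n → ℕ → ℕ :=
  fun k j => if j ≤ bMap n α p F k then F (p.succAbove k) j - 1 else 0

def gOf (n : ℕ) (p : Fin (n + 1)) (G : Fin n → ℕ → ℕ) : Fin (n + 1) → ℕ → ℕ :=
  p.insertNth (fun _ => 0) G

def betaExt (n : ℕ) (p : Fin (n + 1)) (β₁ : Fin n → ℕ) : Fin (n + 1) → ℕ :=
  p.insertNth 0 β₁

def psiMap (n : ℕ) (α : Fin (n + 1) → ℕ) (p : Fin (n + 1)) (β₁ : Fin n → ℕ)
    (G : Fin n → ℕ → ℕ) : Fin (n + 1) → ℕ → ℕ :=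
  fun i j => if j ≤ α i then
    (if j ≤ betaExt n p β₁ i then gOf n p G i j else 0) + 1 else 0

section Fwd
variable {n : ℕ} {σ : Equiv.Perm (Fin (n + 1))} {α : Fin (n + 1) → ℕ}
  {F : Fin (n + 1) → ℕ → ℕ}

lemma sigma_p (σ : Equiv.Perm (Fin (n + 1))) : (σ (σ⁻¹ 0) : ℕ) = 0 := by
  simp

lemma sigma_ne (σ : Equiv.Perm (Fin (n + 1))) {i : Fin (n + 1)} (h : i ≠ σ⁻¹ 0) :
    1 ≤ (σ i : ℕ) := by
  rcases Nat.eq_zero_or_pos (σ i : ℕ) with h0 | h0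
  · exfalso; apply h
    have : σ i = 0 := Fin.ext h0
    calc i = σ⁻¹ (σ i) := by simp
    _ = σ⁻¹ 0 := by rw [this]
  · exact h0

lemma colS (hF : F ∈ SSAFSet (n + 1) α σ) : ∀ j, j ≤ α (σ⁻¹ 0) → F (σ⁻¹ 0) j = 1 := by
  intro j hj
  have h0 : F (σ⁻¹ 0) 0 = 1 := by rw [hF.1.2.1]; rw [sigma_p]
  have h1 := col_anti hF.1.2.2.1 (σ⁻¹ 0) 0 j (Nat.zero_le _) hj
  have h2 := hF.1.1 (σ⁻¹ 0) j hj
  omega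

lemma beta_le (hF : F ∈ SSAFSet (n + 1) α σ) (i : Fin (n + 1)) :
    betaOf n α (σ⁻¹ 0) F i ≤ α i := by
  unfold betaOf bMap
  rcases eq_or_ne i (σ⁻¹ 0) with rfl | h
  · rw [Fin.insertNth_apply_same]; exact Nat.zero_le _
  · obtain ⟨k, rfl⟩ := Fin.exists_succAbove_eq (Ne.symm h).symm
    rw [Fin.insertNth_apply_succAbove]
    exact Nat.findGreatest_le _

lemma char (hF : F ∈ SSAFSet (n + 1) α σ) (i : Fin (n + 1)) (j : ℕ) (hj : j ≤ α i) :
    2 ≤ F i j ↔ (j ≤ betaOf n α (σ⁻¹ 0) F i ∧ i ≠ σ⁻¹ 0) := by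
  unfold betaOf bMap
  rcases eq_or_ne i (σ⁻¹ 0) with rfl | h
  · rw [colS hF j hj]; simp
  · obtain ⟨k, rfl⟩ := Fin.exists_succAbove_eq (Ne.symm h).symm
    rw [Fin.insertNth_apply_succAbove]
    have hP0 : 2 ≤ F ((σ⁻¹ 0).succAbove k) 0 := by
      rw [hF.1.2.1]
      have := sigma_ne σ h; omega
    constructor
    · intro h2
      refine ⟨?_, h⟩
      by_contra hc
      push_neg at hc
      exact Nat.findGreatest_is_greatest hc hj h2
    · rintro ⟨hjb, -⟩
      have hspec : 2 ≤ F ((σ⁻¹ 0).succAbove k)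
          (Nat.findGreatest (fun j => 2 ≤ F ((σ⁻¹ 0).succAbove k) j)
            (α ((σ⁻¹ 0).succAbove k))) :=
        Nat.findGreatest_spec (P := fun j => 2 ≤ F ((σ⁻¹ 0).succAbove k) j) (Nat.zero_le _) hP0
      have hble : Nat.findGreatest (fun j => 2 ≤ F ((σ⁻¹ 0).succAbove k) j)
          (α ((σ⁻¹ 0).succAbove k)) ≤ α ((σ⁻¹ 0).succAbove k) := Nat.findGreatest_le _
      have := col_anti hF.1.2.2.1 ((σ⁻¹ 0).succAbove k) j _ hjb hble
      omega

lemma val1 (hF : F ∈ SSAFSet (n + 1) α σ) (i : Fin (n + 1)) (j : ℕ) (hj : j ≤ α i)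
    (h : ¬ (j ≤ betaOf n α (σ⁻¹ 0) F i ∧ i ≠ σ⁻¹ 0)) : F i j = 1 := by
  have h1 := hF.1.1 i j hj
  have h2 : ¬ 2 ≤ F i j := fun hx => h ((char hF i j hj).mp hx)
  omega

end Fwd

theorem ext_of_mem {n : ℕ} {σ : Equiv.Perm (Fin (n + 1))} {α : Fin (n + 1) → ℕ}
    {F : Fin (n + 1) → ℕ → ℕ} (hF : F ∈ SSAFSet (n + 1) α σ) :
    SigmaExtendable (n + 1) σ (betaOf n α (σ⁻¹ 0) F) α := by
  obtain ⟨⟨hpos, hbase, hdec, hA, hB⟩, hzero⟩ := id hF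
  refine ⟨beta_le hF, ?_⟩
  intro ℓ r hlr
  have hbl := beta_le hF ℓ
  have hbr := beta_le hF r
  have b1 := hbase ℓ
  have b2 := hbase r
  refine ⟨?_, ?_, ?_, ?_⟩
  · -- (1)
    intro hαr hβr
    by_contra hc
    push_neg at hc
    have e1 : F ℓ ((betaOf n α (σ⁻¹ 0) F ℓ) + 1) = 1 := val1 hF ℓ _ (by omega) (by rintro ⟨h1, -⟩; omega)
    have e2 : F r ((betaOf n α (σ⁻¹ 0) F ℓ) + 1) = 1 := val1 hF r _ (by omega) (by rintro ⟨h1, -⟩; omega)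
    have e3 : 1 ≤ F ℓ ((betaOf n α (σ⁻¹ 0) F ℓ)) := hpos ℓ _ (by omega)
    exact hA ℓ r ((betaOf n α (σ⁻¹ 0) F ℓ)) hlr hαr (by omega) ⟨by omega, by omega⟩
  · -- (2)
    intro hαl hβ
    by_contra hc
    push_neg at hc
    have e1 : F r ((betaOf n α (σ⁻¹ 0) F r) + 1) = 1 := val1 hF r _ (by omega) (by rintro ⟨h1, -⟩; omega)
    have e2 : F ℓ ((betaOf n α (σ⁻¹ 0) F r)) = 1 := val1 hF ℓ _ (by omega) (by rintro ⟨h1, -⟩; omega)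
    have e3 : 1 ≤ F r ((betaOf n α (σ⁻¹ 0) F r)) := hpos r _ (by omega)
    exact hB ℓ r ((betaOf n α (σ⁻¹ 0) F r)) hlr hαl hc (by omega) ⟨by omega, by omega⟩
  · -- (3)
    intro hαr hβ
    have h4 : α r ≤ (betaOf n α (σ⁻¹ 0) F r) := by
      by_contra hc
      push_neg at hc
      have e1 : F ℓ ((betaOf n α (σ⁻¹ 0) F r) + 1) = 1 := val1 hF ℓ _ (by omega) (by rintro ⟨h1, -⟩; omega)
      have e2 : F r ((betaOf n α (σ⁻¹ 0) F r) + 1) = 1 := val1 hF r _ (by omega) (by rintro ⟨h1, -⟩; omega)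
      have e3 : F ℓ ((betaOf n α (σ⁻¹ 0) F r)) = 1 := val1 hF ℓ _ (by omega) (by rintro ⟨h1, -⟩; omega)
      exact hA ℓ r ((betaOf n α (σ⁻¹ 0) F r)) hlr hαr (by omega) ⟨by omega, by omega⟩
    refine ⟨le_antisymm h4 hbr |>.symm ▸ rfl, ?_⟩
    have e5 : F ℓ ((betaOf n α (σ⁻¹ 0) F ℓ) + 1) = 1 := val1 hF ℓ _ (by omega) (by rintro ⟨h1, -⟩; omega)
    have e6 : 1 ≤ F r ((betaOf n α (σ⁻¹ 0) F ℓ) + 1) := hpos r _ (by omega)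
    have hlad := ladderA hdec hA hlr hαr ((betaOf n α (σ⁻¹ 0) F ℓ)) (by omega) (by omega)
    omega
  · -- (4)
    intro hαl hβr
    have h4 : α ℓ ≤ (betaOf n α (σ⁻¹ 0) F ℓ) := by
      by_contra hc
      push_neg at hc
      have e1 : F ℓ ((betaOf n α (σ⁻¹ 0) F ℓ) + 1) = 1 := val1 hF ℓ _ (by omega) (by rintro ⟨h1, -⟩; omega)
      have e2 : F r ((betaOf n α (σ⁻¹ 0) F ℓ) + 1 + 1) = 1 := val1 hF r _ (by omega) (by rintro ⟨h1, -⟩; omega)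
      have e3 : 1 ≤ F r ((betaOf n α (σ⁻¹ 0) F ℓ) + 1) := hpos r _ (by omega)
      exact hB ℓ r ((betaOf n α (σ⁻¹ 0) F ℓ) + 1) hlr hαl (by omega) (by omega) ⟨by omega, by omega⟩
    have heq : α ℓ = (betaOf n α (σ⁻¹ 0) F ℓ) := le_antisymm h4 hbl
    refine ⟨heq, ?_⟩
    have e5 : F r ((betaOf n α (σ⁻¹ 0) F r) + 1) = 1 := val1 hF r _ (by omega) (by rintro ⟨h1, -⟩; omega)
    have e6 : 1 ≤ F ℓ ((betaOf n α (σ⁻¹ 0) F r)) := hpos ℓ _ (by omega)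
    have hlad := ladderB hdec hB hlr hαl ((betaOf n α (σ⁻¹ 0) F r)) (by omega) (by omega) (by omega)
    omega

lemma betaOf_succAbove {n : ℕ} (α : Fin (n + 1) → ℕ) (p : Fin (n + 1))
    (F : Fin (n + 1) → ℕ → ℕ) (k : Fin n) :
    betaOf n α p F (p.succAbove k) = bMap n α p F k := by
  unfold betaOf; exact Fin.insertNth_apply_succAbove ..

lemma betaOf_same {n : ℕ} (α : Fin (n + 1) → ℕ) (p : Fin (n + 1))
    (F : Fin (n + 1) → ℕ → ℕ) : betaOf n α p F p = 0 := by
  unfold betaOf; exact Fin.insertNth_apply_same ..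

lemma bMap_le {n : ℕ} (α : Fin (n + 1) → ℕ) (p : Fin (n + 1))
    (F : Fin (n + 1) → ℕ → ℕ) (k : Fin n) : bMap n α p F k ≤ α (p.succAbove k) :=
  Nat.findGreatest_le _

theorem phi_mem {n : ℕ} {σ : Equiv.Perm (Fin (n + 1))} {α : Fin (n + 1) → ℕ}
    {F : Fin (n + 1) → ℕ → ℕ} (σ1 : Equiv.Perm (Fin n))
    (hσ1 : ∀ k : Fin n, (σ1 k : ℕ) + 1 = ((σ ((σ⁻¹ 0).succAbove k)) : ℕ))
    (hF : F ∈ SSAFSet (n + 1) α σ) :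
    phiMap n α (σ⁻¹ 0) F ∈ SSAFSet n (bMap n α (σ⁻¹ 0) F) σ1 := by
  obtain ⟨⟨hpos, hbase, hdec, hA, hB⟩, hzero⟩ := id hF
  have hb2 : ∀ k j, j ≤ bMap n α (σ⁻¹ 0) F k → 2 ≤ F ((σ⁻¹ 0).succAbove k) j := by
    intro k j hj
    refine (char hF _ j (le_trans hj (bMap_le α _ F k))).mpr ⟨?_, Fin.succAbove_ne _ k⟩
    rw [betaOf_succAbove]; exact hj
  refine ⟨⟨?_, ?_, ?_, ?_, ?_⟩, ?_⟩
  · -- positivity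
    intro k j hj
    have := hb2 k j hj
    simp only [phiMap, if_pos hj]
    omega
  · -- basement
    intro k
    have h0 : (0 : ℕ) ≤ bMap n α (σ⁻¹ 0) F k := Nat.zero_le _
    simp only [phiMap, if_pos h0]
    rw [hbase]
    have := hσ1 k
    omega
  · -- decreasing
    intro k j hj
    simp only [phiMap, if_pos hj, if_pos (le_trans (Nat.le_succ j) hj)]
    exact Nat.sub_le_sub_right
      (hdec _ j (le_trans hj (bMap_le α _ F k))) 1
  · -- type A
    intro kl kr i hklr hba hi1
    rintro ⟨u1, u2⟩
    have hlr' : (σ⁻¹ 0).succAbove kl < (σ⁻¹ 0).succAbove kr :=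
      Fin.succAbove_lt_succAbove_iff.mpr hklr
    have hcl1 : i + 1 ≤ bMap n α (σ⁻¹ 0) F kl := le_trans hi1 hba
    have hci : i ≤ bMap n α (σ⁻¹ 0) F kl := le_trans (Nat.le_succ i) hcl1
    simp only [phiMap, if_pos hi1, if_pos hcl1, if_pos hci] at u1 u2
    have w1 := hb2 kl (i + 1) hcl1
    have w2 := hb2 kr (i + 1) hi1
    have w3 := hb2 kl i hci
    have v1 : F ((σ⁻¹ 0).succAbove kl) (i + 1) ≤ F ((σ⁻¹ 0).succAbove kr) (i + 1) := by omega
    have v2 : F ((σ⁻¹ 0).succAbove kr) (i + 1) ≤ F ((σ⁻¹ 0).succAbove kl) i := by omega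
    rcases le_or_gt (α ((σ⁻¹ 0).succAbove kr)) (α ((σ⁻¹ 0).succAbove kl)) with hc | hc
    · exact hA _ _ i hlr' hc (le_trans hi1 (bMap_le α _ F kr)) ⟨v1, v2⟩
    · have h4 := ((ext_of_mem hF).2 _ _ hlr').2.2.2 hc
        (by rw [betaOf_succAbove, betaOf_succAbove]; exact hba)
      have hbetal := betaOf_succAbove α (σ⁻¹ 0) F kl
      have hbetar := betaOf_succAbove α (σ⁻¹ 0) F kr
      have hup := upB hdec hB hlr' hc (i + 1) (by omega) v1
      have e1 : F ((σ⁻¹ 0).succAbove kr) (α ((σ⁻¹ 0).succAbove kl) + 1) = 1 :=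
        val1 hF _ _ (by omega) (by rintro ⟨h1, -⟩; omega)
      have e2 : 1 ≤ F ((σ⁻¹ 0).succAbove kl) (α ((σ⁻¹ 0).succAbove kl)) :=
        hpos _ _ le_rfl
      omega
  · -- type B
    intro kl kr i hklr hba hi hi1
    rintro ⟨u1, u2⟩
    have hlr' : (σ⁻¹ 0).succAbove kl < (σ⁻¹ 0).succAbove kr :=
      Fin.succAbove_lt_succAbove_iff.mpr hklr
    have hcri : i ≤ bMap n α (σ⁻¹ 0) F kr := le_trans (Nat.le_succ i) hi1
    simp only [phiMap, if_pos hi, if_pos hi1, if_pos hcri] at u1 u2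
    have w1 := hb2 kr (i + 1) hi1
    have w2 := hb2 kl i hi
    have w3 := hb2 kr i hcri
    have v1 : F ((σ⁻¹ 0).succAbove kr) (i + 1) ≤ F ((σ⁻¹ 0).succAbove kl) i := by omega
    have v2 : F ((σ⁻¹ 0).succAbove kl) i ≤ F ((σ⁻¹ 0).succAbove kr) i := by omega
    rcases lt_or_ge (α ((σ⁻¹ 0).succAbove kl)) (α ((σ⁻¹ 0).succAbove kr)) with hc | hc
    · exact hB _ _ i hlr' hc (le_trans hi (bMap_le α _ F kl))
        (le_trans hi1 (bMap_le α _ F kr)) ⟨v1, v2⟩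
    · have h4 := ((ext_of_mem hF).2 _ _ hlr').2.2.1 hc
        (by rw [betaOf_succAbove, betaOf_succAbove]; exact hba)
      have hbetal := betaOf_succAbove α (σ⁻¹ 0) F kl
      have hbetar := betaOf_succAbove α (σ⁻¹ 0) F kr
      have hup := upA hdec hA hlr' hc i (α ((σ⁻¹ 0).succAbove kr)) v1 (by omega) le_rfl
      have e1 : F ((σ⁻¹ 0).succAbove kl) (α ((σ⁻¹ 0).succAbove kr)) = 1 :=
        val1 hF _ _ (by omega) (by rintro ⟨h1, -⟩; omega)
      have e2 := hb2 kr (α ((σ⁻¹ 0).succAbove kr)) (by omega)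
      omega
  · -- normalized
    intro k j hj
    simp only [phiMap, if_neg (by omega : ¬ j ≤ bMap n α (σ⁻¹ 0) F k)]

lemma betaExt_succAbove {n : ℕ} (p : Fin (n + 1)) (β₁ : Fin n → ℕ) (k : Fin n) :
    betaExt n p β₁ (p.succAbove k) = β₁ k := Fin.insertNth_apply_succAbove ..

lemma betaExt_same {n : ℕ} (p : Fin (n + 1)) (β₁ : Fin n → ℕ) :
    betaExt n p β₁ p = 0 := Fin.insertNth_apply_same ..

lemma gOf_succAbove {n : ℕ} (p : Fin (n + 1)) (G : Fin n → ℕ → ℕ) (k : Fin n) :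
    gOf n p G (p.succAbove k) = G k := Fin.insertNth_apply_succAbove ..

lemma gOf_same {n : ℕ} (p : Fin (n + 1)) (G : Fin n → ℕ → ℕ) (j : ℕ) :
    gOf n p G p j = 0 := by
  unfold gOf; rw [Fin.insertNth_apply_same]

lemma ladderA_perm {n : ℕ} {β₁ : Fin n → ℕ} {σ1 : Equiv.Perm (Fin n)}
    {G : Fin n → ℕ → ℕ} (hG : G ∈ SSAFSet n β₁ σ1) {kl kr : Fin n} (hklr : kl < kr)
    (hbb : β₁ kr ≤ β₁ kl) (i : ℕ) (hi : i ≤ β₁ kr) (hle : G kl i ≤ G kr i) :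
    (σ1 kl : ℕ) < σ1 kr := by
  obtain ⟨⟨gpos, gbase, gdec, gA, gB⟩, -⟩ := id hG
  have hne : (σ1 kl : ℕ) ≠ σ1 kr := by
    intro h; exact absurd (σ1.injective (Fin.ext h)) (ne_of_lt hklr)
  have b1 := gbase kl; have b2 := gbase kr
  cases i with
  | zero => omega
  | succ t => have := ladderA gdec gA hklr hbb t hi hle; omega

lemma ladderB_perm {n : ℕ} {β₁ : Fin n → ℕ} {σ1 : Equiv.Perm (Fin n)}
    {G : Fin n → ℕ → ℕ} (hG : G ∈ SSAFSet n β₁ σ1) {kl kr : Fin n} (hklr : kl < kr)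
    (hbb : β₁ kl < β₁ kr) (i : ℕ) (hi : i ≤ β₁ kl) (hi1 : i + 1 ≤ β₁ kr)
    (hle : G kr (i + 1) ≤ G kl i) : (σ1 kr : ℕ) < σ1 kl := by
  obtain ⟨⟨gpos, gbase, gdec, gA, gB⟩, -⟩ := id hG
  have b1 := gbase kl; have b2 := gbase kr
  have := ladderB gdec gB hklr hbb i hi hi1 hle; omega

theorem psi_mem {n : ℕ} {σ : Equiv.Perm (Fin (n + 1))} {α : Fin (n + 1) → ℕ}
    (σ1 : Equiv.Perm (Fin n))
    (hσ1 : ∀ k : Fin n, (σ1 k : ℕ) + 1 = ((σ ((σ⁻¹ 0).succAbove k)) : ℕ))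
    {β₁ : Fin n → ℕ} {G : Fin n → ℕ → ℕ}
    (hext : SigmaExtendable (n + 1) σ (betaExt n (σ⁻¹ 0) β₁) α)
    (hG : G ∈ SSAFSet n β₁ σ1) :
    psiMap n α (σ⁻¹ 0) β₁ G ∈ SSAFSet (n + 1) α σ := by
  obtain ⟨⟨gpos, gbase, gdec, gA, gB⟩, gzero⟩ := id hG
  have hβα := hext.1
  have pv : ∀ i j, j ≤ α i → psiMap n α (σ⁻¹ 0) β₁ G i j =
      (if j ≤ betaExt n (σ⁻¹ 0) β₁ i then gOf n (σ⁻¹ 0) G i j else 0) + 1 :=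
    fun i j h => if_pos h
  have hgpos : ∀ i j, j ≤ betaExt n (σ⁻¹ 0) β₁ i → i ≠ σ⁻¹ 0 →
      1 ≤ gOf n (σ⁻¹ 0) G i j := by
    intro i j hj hip
    obtain ⟨k, rfl⟩ := Fin.exists_succAbove_eq (Ne.symm hip).symm
    rw [gOf_succAbove]
    rw [betaExt_succAbove] at hj
    exact gpos k j hj
  refine ⟨⟨?_, ?_, ?_, ?_, ?_⟩, ?_⟩
  · -- positivity
    intro i j hj
    rw [pv i j hj]; omega
  · -- basement
    intro i
    rw [pv i 0 (Nat.zero_le _)]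
    rcases eq_or_ne i (σ⁻¹ 0) with rfl | hip
    · rw [if_pos (by rw [betaExt_same])]
      rw [gOf_same]
      have := sigma_p σ; omega
    · obtain ⟨k, rfl⟩ := Fin.exists_succAbove_eq (Ne.symm hip).symm
      rw [if_pos (Nat.zero_le _), gOf_succAbove]
      have := gbase k; have := hσ1 k; omega
  · -- decreasing
    intro i j hj
    rw [pv i (j + 1) hj, pv i j (by omega)]
    by_cases h1 : j + 1 ≤ betaExt n (σ⁻¹ 0) β₁ i
    · rw [if_pos h1, if_pos (by omega)]
      have : gOf n (σ⁻¹ 0) G i (j + 1) ≤ gOf n (σ⁻¹ 0) G i j := by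
        rcases eq_or_ne i (σ⁻¹ 0) with rfl | hip
        · rw [gOf_same, gOf_same]
        · obtain ⟨k, rfl⟩ := Fin.exists_succAbove_eq (Ne.symm hip).symm
          rw [gOf_succAbove]
          rw [betaExt_succAbove] at h1
          exact gdec k j h1
      omega
    · rw [if_neg h1]
      split_ifs with h2
      · omega
      · omega
  · -- type A
    intro ℓ r i hlr hαr hi1
    rintro ⟨u1, u2⟩
    have hc1 : i + 1 ≤ α ℓ := le_trans hi1 hαr
    have hc2 : i ≤ α ℓ := by omega
    rw [pv ℓ (i + 1) hc1, pv r (i + 1) hi1] at u1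
    rw [pv r (i + 1) hi1, pv ℓ i hc2] at u2
    obtain ⟨-, hpair⟩ := id hext
    obtain ⟨E1, E2, E3, E4⟩ := hpair ℓ r hlr
    by_cases hcase : i + 1 ≤ betaExt n (σ⁻¹ 0) β₁ r
    · have hrp : r ≠ σ⁻¹ 0 := by
        intro h; rw [h, betaExt_same] at hcase; omega
      obtain ⟨kr, rfl⟩ := Fin.exists_succAbove_eq (Ne.symm hrp).symm
      rw [if_pos hcase] at u1 u2
      rw [gOf_succAbove] at u1 u2
      rw [betaExt_succAbove] at hcase
      rcases le_or_gt (betaExt n (σ⁻¹ 0) β₁ ((σ⁻¹ 0).succAbove kr))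
          (betaExt n (σ⁻¹ 0) β₁ ℓ) with hbb | hbb
      · rw [betaExt_succAbove] at hbb
        have hl1 : i + 1 ≤ betaExt n (σ⁻¹ 0) β₁ ℓ := by
          have := le_trans hcase hbb; omega
        have hlp : ℓ ≠ σ⁻¹ 0 := by
          intro h; rw [h, betaExt_same] at hl1; omega
        obtain ⟨kl, rfl⟩ := Fin.exists_succAbove_eq (Ne.symm hlp).symm
        rw [betaExt_succAbove] at hl1 hbb
        have hklr : kl < kr := Fin.succAbove_lt_succAbove_iff.mp hlr
        have hA1 : i + 1 ≤ betaExt n (σ⁻¹ 0) β₁ ((σ⁻¹ 0).succAbove kl) := by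
          rw [betaExt_succAbove]; exact hl1
        have hA2 : i ≤ betaExt n (σ⁻¹ 0) β₁ ((σ⁻¹ 0).succAbove kl) := by
          rw [betaExt_succAbove]; omega
        rw [if_pos hA1, gOf_succAbove] at u1
        rw [if_pos hA2, gOf_succAbove] at u2
        exact gA kl kr i hklr hbb hcase ⟨by omega, by omega⟩
      · rw [betaExt_succAbove] at hbb
        have h3 := E3 hαr (by rw [betaExt_succAbove]; exact hbb)
        rw [betaExt_succAbove] at h3
        by_cases hli : i ≤ betaExt n (σ⁻¹ 0) β₁ ℓ ∧ ℓ ≠ σ⁻¹ 0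
        · obtain ⟨hli1, hlp⟩ := hli
          obtain ⟨kl, rfl⟩ := Fin.exists_succAbove_eq (Ne.symm hlp).symm
          rw [betaExt_succAbove] at hli1 hbb
          have hklr : kl < kr := Fin.succAbove_lt_succAbove_iff.mp hlr
          rw [if_pos (by rw [betaExt_succAbove]; exact hli1), gOf_succAbove] at u2
          have hlad := ladderB_perm hG hklr hbb i hli1 hcase (by omega)
          have e1 := hσ1 kl; have e2 := hσ1 kr
          omega
        · have hz : (if i ≤ betaExt n (σ⁻¹ 0) β₁ ℓ then gOf n (σ⁻¹ 0) G ℓ i else 0) = 0 := by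
            by_cases h1 : i ≤ betaExt n (σ⁻¹ 0) β₁ ℓ
            · rw [if_pos h1]
              have hlp : ℓ = σ⁻¹ 0 := by
                by_contra hcon; exact hli ⟨h1, hcon⟩
              subst hlp; rw [gOf_same]
            · rw [if_neg h1]
          rw [hz] at u2
          have := gpos kr (i + 1) hcase
          omega
    · -- β r < i + 1 : right entry is 1, left must be ≥ 2
      have hbb : betaExt n (σ⁻¹ 0) β₁ r ≤ betaExt n (σ⁻¹ 0) β₁ ℓ := by
        by_contra hcon; push_neg at hcon
        have h3 := E3 hαr hcon
        omega
      have h1 := E1 hαr hbb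
      have hl1 : i + 1 ≤ betaExt n (σ⁻¹ 0) β₁ ℓ := le_trans hi1 h1
      have hlp : ℓ ≠ σ⁻¹ 0 := by
        intro h; rw [h, betaExt_same] at hl1; omega
      rw [if_pos hl1, if_neg hcase] at u1
      have := hgpos ℓ (i + 1) hl1 hlp
      omega
  · -- type B
    intro ℓ r i hlr hαl hi hi1
    rintro ⟨u1, u2⟩
    have hc2 : i ≤ α r := by omega
    rw [pv r (i + 1) hi1, pv ℓ i hi] at u1
    rw [pv ℓ i hi, pv r i hc2] at u2
    obtain ⟨-, hpair⟩ := id hext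
    obtain ⟨E1, E2, E3, E4⟩ := hpair ℓ r hlr
    by_cases hil : i ≤ betaExt n (σ⁻¹ 0) β₁ ℓ ∧ ℓ ≠ σ⁻¹ 0
    · obtain ⟨hil1, hlp⟩ := hil
      obtain ⟨kl, rfl⟩ := Fin.exists_succAbove_eq (Ne.symm hlp).symm
      have hL : i ≤ betaExt n (σ⁻¹ 0) β₁ ((σ⁻¹ 0).succAbove kl) := hil1
      rw [if_pos hL, gOf_succAbove] at u1
      rw [if_pos hL, gOf_succAbove] at u2
      rw [betaExt_succAbove] at hil1
      by_cases hcase : i + 1 ≤ betaExt n (σ⁻¹ 0) β₁ r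
      · have hrp : r ≠ σ⁻¹ 0 := by
          intro h; rw [h, betaExt_same] at hcase; omega
        obtain ⟨kr, rfl⟩ := Fin.exists_succAbove_eq (Ne.symm hrp).symm
        rw [betaExt_succAbove] at hcase
        have hklr : kl < kr := Fin.succAbove_lt_succAbove_iff.mp hlr
        have hB1 : i + 1 ≤ betaExt n (σ⁻¹ 0) β₁ ((σ⁻¹ 0).succAbove kr) := by
          rw [betaExt_succAbove]; exact hcase
        have hB2 : i ≤ betaExt n (σ⁻¹ 0) β₁ ((σ⁻¹ 0).succAbove kr) := by
          rw [betaExt_succAbove]; omega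
        rw [if_pos hB1, gOf_succAbove] at u1
        rw [if_pos hB2, gOf_succAbove] at u2
        rcases lt_or_ge (β₁ kl) (β₁ kr) with hbb | hbb
        · exact gB kl kr i hklr hbb hil1 hcase ⟨by omega, by omega⟩
        · have h4 := E4 hαl (by rw [betaExt_succAbove, betaExt_succAbove]; exact hbb)
          have hlad := ladderA_perm hG hklr hbb i (by omega) (by omega)
          have e1 := hσ1 kl; have e2 := hσ1 kr
          omega
      · by_cases hir : i ≤ betaExt n (σ⁻¹ 0) β₁ r ∧ r ≠ σ⁻¹ 0
        · obtain ⟨hir1, hrp⟩ := hir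
          obtain ⟨kr, rfl⟩ := Fin.exists_succAbove_eq (Ne.symm hrp).symm
          rw [betaExt_succAbove] at hir1 hcase
          have hklr : kl < kr := Fin.succAbove_lt_succAbove_iff.mp hlr
          have hbb : β₁ kr ≤ β₁ kl := by omega
          rw [if_pos (by rw [betaExt_succAbove]; exact hir1), gOf_succAbove] at u2
          have h4 := E4 hαl (by rw [betaExt_succAbove, betaExt_succAbove]; exact hbb)
          have hlad := ladderA_perm hG hklr hbb i hir1 (by omega)
          have e1 := hσ1 kl; have e2 := hσ1 kr
          omega
        · have hz : (if i ≤ betaExt n (σ⁻¹ 0) β₁ r then gOf n (σ⁻¹ 0) G r i else 0) = 0 := by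
            by_cases h1 : i ≤ betaExt n (σ⁻¹ 0) β₁ r
            · rw [if_pos h1]
              have hrp : r = σ⁻¹ 0 := by
                by_contra hcon; exact hir ⟨h1, hcon⟩
              subst hrp; rw [gOf_same]
            · rw [if_neg h1]
          rw [hz] at u2
          have := gpos kl i hil1
          omega
    · -- left entry is 1: impossible situations
      by_cases hcase : i + 1 ≤ betaExt n (σ⁻¹ 0) β₁ r
      · have hrp : r ≠ σ⁻¹ 0 := by
          intro h; rw [h, betaExt_same] at hcase; omega
        have hz : (if i ≤ betaExt n (σ⁻¹ 0) β₁ ℓ then gOf n (σ⁻¹ 0) G ℓ i else 0) = 0 := by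
          by_cases h1 : i ≤ betaExt n (σ⁻¹ 0) β₁ ℓ
          · rw [if_pos h1]
            have hlp : ℓ = σ⁻¹ 0 := by
              by_contra hcon; exact hil ⟨h1, hcon⟩
            subst hlp; rw [gOf_same]
          · rw [if_neg h1]
        rw [hz, if_pos hcase] at u1
        have := hgpos r (i + 1) hcase hrp
        omega
      · -- both 1: derive that hil must hold
        apply hil
        rcases lt_or_ge (betaExt n (σ⁻¹ 0) β₁ ℓ) (betaExt n (σ⁻¹ 0) β₁ r) with hbb | hbb
        · have h2 := E2 hαl hbb
          omega
        · have h4 := E4 hαl hbb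
          constructor
          · omega
          · intro h
            rw [h] at h4
            have := sigma_p σ
            omega
  · -- normalized
    intro i j hj
    simp only [psiMap, if_neg (by omega : ¬ j ≤ α i)]

lemma psiMap_apply {n : ℕ} (α : Fin (n + 1) → ℕ) (p : Fin (n + 1)) (β₁ : Fin n → ℕ)
    (G : Fin n → ℕ → ℕ) (i : Fin (n + 1)) (j : ℕ) (hj : j ≤ α i) :
    psiMap n α p β₁ G i j = (if j ≤ betaExt n p β₁ i then gOf n p G i j else 0) + 1 :=
  if_pos hj

theorem bMap_psi {n : ℕ} {σ : Equiv.Perm (Fin (n + 1))} {α : Fin (n + 1) → ℕ}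
    {σ1 : Equiv.Perm (Fin n)} {β₁ : Fin n → ℕ} {G : Fin n → ℕ → ℕ}
    (hext : SigmaExtendable (n + 1) σ (betaExt n (σ⁻¹ 0) β₁) α)
    (hG : G ∈ SSAFSet n β₁ σ1) :
    bMap n α (σ⁻¹ 0) (psiMap n α (σ⁻¹ 0) β₁ G) = β₁ := by
  obtain ⟨⟨gpos, gbase, gdec, gA, gB⟩, gzero⟩ := id hG
  funext k
  have hba : β₁ k ≤ α ((σ⁻¹ 0).succAbove k) := by
    have := hext.1 ((σ⁻¹ 0).succAbove k)
    rwa [betaExt_succAbove] at this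
  have hP : 2 ≤ psiMap n α (σ⁻¹ 0) β₁ G ((σ⁻¹ 0).succAbove k) (β₁ k) := by
    unfold psiMap
    rw [if_pos hba, if_pos (by rw [betaExt_succAbove]), gOf_succAbove]
    have := gpos k (β₁ k) le_rfl
    omega
  apply le_antisymm
  · by_contra hlt
    push_neg at hlt
    have hcle : bMap n α (σ⁻¹ 0) (psiMap n α (σ⁻¹ 0) β₁ G) k ≤ α ((σ⁻¹ 0).succAbove k) :=
      bMap_le α _ _ k
    have hspec : 2 ≤ psiMap n α (σ⁻¹ 0) β₁ G ((σ⁻¹ 0).succAbove k)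
        (bMap n α (σ⁻¹ 0) (psiMap n α (σ⁻¹ 0) β₁ G) k) := by
      unfold bMap
      exact Nat.findGreatest_spec
        (P := fun j => 2 ≤ psiMap n α (σ⁻¹ 0) β₁ G ((σ⁻¹ 0).succAbove k) j) hba hP
    have hval : psiMap n α (σ⁻¹ 0) β₁ G ((σ⁻¹ 0).succAbove k)
        (bMap n α (σ⁻¹ 0) (psiMap n α (σ⁻¹ 0) β₁ G) k) = 1 := by
      rw [psiMap_apply _ _ _ _ _ _ hcle, if_neg (by rw [betaExt_succAbove]; omega)]
    omega
  · exact Nat.le_findGreatest hba hP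

theorem psi_phi {n : ℕ} {σ : Equiv.Perm (Fin (n + 1))} {α : Fin (n + 1) → ℕ}
    {F : Fin (n + 1) → ℕ → ℕ} (hF : F ∈ SSAFSet (n + 1) α σ) :
    psiMap n α (σ⁻¹ 0) (bMap n α (σ⁻¹ 0) F) (phiMap n α (σ⁻¹ 0) F) = F := by
  obtain ⟨⟨hpos, hbase, hdec, hA, hB⟩, hzero⟩ := id hF
  funext i j
  by_cases hj : j ≤ α i
  · unfold psiMap
    rw [if_pos hj]
    rcases eq_or_ne i (σ⁻¹ 0) with rfl | hip
    · rw [colS hF j hj]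
      by_cases h1 : j ≤ betaExt n (σ⁻¹ 0) (bMap n α (σ⁻¹ 0) F) (σ⁻¹ 0)
      · rw [if_pos h1, gOf_same]
      · rw [if_neg h1]
    · obtain ⟨k, rfl⟩ := Fin.exists_succAbove_eq (Ne.symm hip).symm
      rw [gOf_succAbove]
      by_cases h1 : j ≤ betaExt n (σ⁻¹ 0) (bMap n α (σ⁻¹ 0) F) ((σ⁻¹ 0).succAbove k)
      · rw [if_pos h1]
        rw [betaExt_succAbove] at h1
        unfold phiMap
        rw [if_pos h1]
        have h2 : 2 ≤ F ((σ⁻¹ 0).succAbove k) j := by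
          refine (char hF _ j hj).mpr ⟨?_, Fin.succAbove_ne _ k⟩
          rw [betaOf_succAbove]; exact h1
        omega
      · rw [if_neg h1]
        rw [betaExt_succAbove] at h1
        have : F ((σ⁻¹ 0).succAbove k) j = 1 := by
          refine val1 hF _ j hj ?_
          rintro ⟨h2, -⟩
          rw [betaOf_succAbove] at h2
          exact h1 h2
        omega
  · unfold psiMap
    rw [if_neg hj]
    rw [hzero i j (by omega)]

theorem phi_psi {n : ℕ} {σ : Equiv.Perm (Fin (n + 1))} {α : Fin (n + 1) → ℕ}
    {σ1 : Equiv.Perm (Fin n)} {β₁ : Fin n → ℕ} {G : Fin n → ℕ → ℕ}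
    (hext : SigmaExtendable (n + 1) σ (betaExt n (σ⁻¹ 0) β₁) α)
    (hG : G ∈ SSAFSet n β₁ σ1) :
    phiMap n α (σ⁻¹ 0) (psiMap n α (σ⁻¹ 0) β₁ G) = G := by
  obtain ⟨⟨gpos, gbase, gdec, gA, gB⟩, gzero⟩ := id hG
  funext k j
  unfold phiMap
  rw [bMap_psi hext hG]
  have hba : β₁ k ≤ α ((σ⁻¹ 0).succAbove k) := by
    have := hext.1 ((σ⁻¹ 0).succAbove k)
    rwa [betaExt_succAbove] at this
  by_cases h1 : j ≤ β₁ k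
  · rw [if_pos h1]
    unfold psiMap
    rw [if_pos (le_trans h1 hba), if_pos (by rw [betaExt_succAbove]; exact h1),
      gOf_succAbove]
    omega
  · rw [if_neg h1]
    rw [gzero k j (by omega)]

theorem weight_eq {n : ℕ} {σ : Equiv.Perm (Fin (n + 1))} {α : Fin (n + 1) → ℕ}
    {F : Fin (n + 1) → ℕ → ℕ} (hF : F ∈ SSAFSet (n + 1) α σ) (x : ℕ → ℝ) :
    ∏ i : Fin (n + 1), ∏ j ∈ Finset.Icc 1 (α i), x (F i j)
      = (x 1) ^ ((∑ i, α i) - ∑ k, bMap n α (σ⁻¹ 0) F k) *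
        ∏ k : Fin n, ∏ j ∈ Finset.Icc 1 (bMap n α (σ⁻¹ 0) F k),
          x (phiMap n α (σ⁻¹ 0) F k j + 1) := by
  have hIcc : ∀ m : ℕ, Finset.Icc 1 m = Finset.Ioc 0 m := by
    intro m; ext t; simp only [Finset.mem_Icc, Finset.mem_Ioc]; omega
  have colsplit : ∀ i : Fin (n + 1), ∏ j ∈ Finset.Icc 1 (α i), x (F i j)
      = (x 1) ^ (α i - betaOf n α (σ⁻¹ 0) F i) *
        ∏ j ∈ Finset.Icc 1 (betaOf n α (σ⁻¹ 0) F i), x (F i j) := by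
    intro i
    rw [hIcc, hIcc, ← Finset.prod_Ioc_consecutive _ (Nat.zero_le _) (beta_le hF i)]
    have h2 : ∏ j ∈ Finset.Ioc (betaOf n α (σ⁻¹ 0) F i) (α i), x (F i j)
        = (x 1) ^ (α i - betaOf n α (σ⁻¹ 0) F i) := by
      rw [← Nat.card_Ioc, ← Finset.prod_const]
      refine Finset.prod_congr rfl ?_
      intro t ht
      rw [Finset.mem_Ioc] at ht
      rw [val1 hF i t ht.2 (by rintro ⟨h1, -⟩; omega)]
    rw [h2, mul_comm]
  rw [Finset.prod_congr rfl (fun i _ => colsplit i), Finset.prod_mul_distrib]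
  congr 1
  · rw [Finset.prod_pow_eq_pow_sum]
    congr 1
    rw [Finset.sum_tsub_distrib _ (fun i _ => beta_le hF i)]
    congr 1
    rw [Fin.sum_univ_succAbove (betaOf n α (σ⁻¹ 0) F) (σ⁻¹ 0), betaOf_same]
    simp only [betaOf_succAbove, zero_add]
  · rw [Fin.prod_univ_succAbove
      (fun i => ∏ j ∈ Finset.Icc 1 (betaOf n α (σ⁻¹ 0) F i), x (F i j)) (σ⁻¹ 0)]
    rw [betaOf_same]
    simp only [Finset.Icc_eq_empty_of_lt (by omega : (1:ℕ) > 0), Finset.prod_empty, one_mul]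
    refine Finset.prod_congr rfl ?_
    intro k _
    rw [betaOf_succAbove]
    refine Finset.prod_congr rfl ?_
    intro t ht
    rw [Finset.mem_Icc] at ht
    congr 1
    unfold phiMap
    rw [if_pos ht.2]
    have h2 : 2 ≤ F ((σ⁻¹ 0).succAbove k) t := by
      refine (char hF _ t (le_trans ht.2 (bMap_le α _ F k))).mpr
        ⟨?_, Fin.succAbove_ne _ k⟩
      rw [betaOf_succAbove]; exact ht.2
    omega

lemma ssaf_finite (n : ℕ) (α : Fin n → ℕ) (σ : Equiv.Perm (Fin n)) :
    (SSAFSet n α σ).Finite := by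
  classical
  set M := ∑ i, α i with hM
  have hαM : ∀ i, α i ≤ M := fun i => Finset.single_le_sum (fun _ _ => Nat.zero_le _)
    (Finset.mem_univ i)
  set e : (Fin n → ℕ → ℕ) → (Fin n → Fin (M + 1) → Fin (n + 1)) :=
    fun F i j => ⟨min (F i (j : ℕ)) n, Nat.lt_succ_of_le (min_le_right _ _)⟩ with he
  apply Set.Finite.of_finite_image (f := e) (Set.toFinite _)
  intro F hFm F' hFm' heq
  have hb : ∀ (F : Fin n → ℕ → ℕ), F ∈ SSAFSet n α σ → ∀ i j, F i j ≤ n := by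
    intro F hFm i j
    by_cases hj : j ≤ α i
    · have h1 := col_anti hFm.1.2.2.1 i 0 j (Nat.zero_le _) hj
      have h2 := hFm.1.2.1 i
      have h3 : (σ i : ℕ) < n := (σ i).isLt
      omega
    · rw [hFm.2 i j (by omega)]
      exact Nat.zero_le _
  funext i j
  by_cases hj : j ≤ M
  · have h1 := congrArg Fin.val (congrFun (congrFun heq i) ⟨j, by omega⟩)
    simp only [he] at h1
    have h2 := hb F hFm i j
    have h3 := hb F' hFm' i j
    omega
  · rw [hFm.2 i j (by have := hαM i; omega), hFm'.2 i j (by have := hαM i; omega)]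

lemma ext_finite (n : ℕ) (σ : Equiv.Perm (Fin (n + 1))) (α : Fin (n + 1) → ℕ) :
    {β₁ : Fin n → ℕ | SigmaExtendable (n + 1) σ ((σ⁻¹ 0).insertNth 0 β₁) α}.Finite := by
  classical
  set M := ∑ i, α i with hM
  have hαM : ∀ i, α i ≤ M := fun i => Finset.single_le_sum (fun _ _ => Nat.zero_le _)
    (Finset.mem_univ i)
  set e : (Fin n → ℕ) → (Fin n → Fin (M + 1)) :=
    fun β k => ⟨min (β k) M, Nat.lt_succ_of_le (min_le_right _ _)⟩ with he
  apply Set.Finite.of_finite_image (f := e) (Set.toFinite _)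
  intro β hβm β' hβm' heq
  have hb : ∀ (β : Fin n → ℕ), β ∈ {β₁ : Fin n → ℕ |
      SigmaExtendable (n + 1) σ ((σ⁻¹ 0).insertNth 0 β₁) α} → ∀ k, β k ≤ M := by
    intro β hβ k
    have h1 := hβ.1 ((σ⁻¹ 0).succAbove k)
    rw [Fin.insertNth_apply_succAbove] at h1
    exact le_trans h1 (hαM _)
  funext k
  have h1 := congrArg Fin.val (congrFun heq k)
  simp only [he] at h1
  have h2 := hb β hβm k
  have h3 := hb β' hβm' k
  omega

theorem stmt13 (n : ℕ) (σ : Equiv.Perm (Fin (n + 1))) (α : Fin (n + 1) → ℕ)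
    (σ1 : Equiv.Perm (Fin n))
    (hσ1 : ∀ i : Fin n, (σ1 i : ℕ) + 1 = ((σ ((σ⁻¹ 0).succAbove i)) : ℕ))
    (x : ℕ → ℝ) :
    atomSum (n + 1) α σ x =
      ∑ᶠ β₁ ∈ {β₁ : Fin n → ℕ |
          SigmaExtendable (n + 1) σ ((σ⁻¹ 0).insertNth 0 β₁) α},
        (x 1) ^ ((∑ i, α i) - ∑ i, β₁ i) *
          atomSum n β₁ σ1 (fun j => x (j + 1)) := by
  classical
  have hpfin := ssaf_finite (n + 1) α σ
  have hSfin := ext_finite n σ α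
  have hGfin : ∀ β₁ : Fin n → ℕ, (SSAFSet n β₁ σ1).Finite :=
    fun β₁ => ssaf_finite n β₁ σ1
  unfold atomSum
  rw [finsum_mem_eq_finite_toFinset_sum _ hpfin,
    finsum_mem_eq_finite_toFinset_sum _ hSfin]
  have hsummand : ∀ β₁ : Fin n → ℕ,
      (x 1) ^ ((∑ i, α i) - ∑ i, β₁ i) *
        (∑ᶠ G ∈ SSAFSet n β₁ σ1,
          ∏ k : Fin n, ∏ j ∈ Finset.Icc 1 (β₁ k), (fun j => x (j + 1)) (G k j))
      = ∑ G ∈ (hGfin β₁).toFinset,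
          (x 1) ^ ((∑ i, α i) - ∑ i, β₁ i) *
            ∏ k : Fin n, ∏ j ∈ Finset.Icc 1 (β₁ k), (fun j => x (j + 1)) (G k j) := by
    intro β₁
    rw [finsum_mem_eq_finite_toFinset_sum _ (hGfin β₁), Finset.mul_sum]
  rw [Finset.sum_congr rfl (fun β₁ _ => hsummand β₁)]
  rw [Finset.sum_sigma' (s := hSfin.toFinset) (t := fun β₁ => (hGfin β₁).toFinset)
    (f := fun β₁ G => (x 1) ^ ((∑ i, α i) - ∑ i, β₁ i) *
      ∏ k : Fin n, ∏ j ∈ Finset.Icc 1 (β₁ k), (fun j => x (j + 1)) (G k j))]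
  refine Finset.sum_nbij'
    (i := fun F => ⟨bMap n α (σ⁻¹ 0) F, phiMap n α (σ⁻¹ 0) F⟩)
    (j := fun q => psiMap n α (σ⁻¹ 0) q.1 q.2) ?_ ?_ ?_ ?_ ?_
  · intro F hFm
    have hF := hpfin.mem_toFinset.mp hFm
    refine Finset.mem_sigma.mpr ⟨?_, ?_⟩
    · exact hSfin.mem_toFinset.mpr (ext_of_mem hF)
    · exact ((hGfin _).mem_toFinset).mpr (phi_mem σ1 hσ1 hF)
  · rintro ⟨β₁, G⟩ hq
    obtain ⟨hq1, hq2⟩ := Finset.mem_sigma.mp hq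
    have hext : SigmaExtendable (n + 1) σ (betaExt n (σ⁻¹ 0) β₁) α :=
      hSfin.mem_toFinset.mp hq1
    have hG : G ∈ SSAFSet n β₁ σ1 := (hGfin β₁).mem_toFinset.mp hq2
    exact hpfin.mem_toFinset.mpr (psi_mem σ1 hσ1 hext hG)
  · intro F hFm
    exact psi_phi (hpfin.mem_toFinset.mp hFm)
  · rintro ⟨β₁, G⟩ hq
    obtain ⟨hq1, hq2⟩ := Finset.mem_sigma.mp hq
    have hext : SigmaExtendable (n + 1) σ (betaExt n (σ⁻¹ 0) β₁) α :=
      hSfin.mem_toFinset.mp hq1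
    have hG : G ∈ SSAFSet n β₁ σ1 := (hGfin β₁).mem_toFinset.mp hq2
    exact Sigma.ext (bMap_psi hext hG) (heq_of_eq (phi_psi hext hG))
  · intro F hFm
    exact weight_eq (hpfin.mem_toFinset.mp hFm) x
end
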